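/- Let φ be a positive expansive continuous flow without singular points on a compact metric space X. Then every point of X is stable for the inverse flow φ⁻¹, with δ uniform over X: for every ε > 0 there is δ > 0 such that whenever d(x,y) < δ there exists g = (h₁,h₂) ∈ ℋ² with d(φ_{-h₁(t)}x, φ_{-h₂(t)}y) < ε for all t ≥ 0. -/

import Mathlib

open Metric Set
open Filter Topology

/-- A continuous flow on `X`. -/
def IsFlow {X : Type*} [TopologicalSpace X] (φ : ℝ → X → X) : Prop :=
  Continuous (fun p : ℝ × X => φ p.1 p.2) ∧
  (∀ x, φ 0 x = x) ∧
  (∀ s t x, φ (s + t) x = φ s (φ t x))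

/-- A singular point of the flow (an equilibrium). -/
def IsSingular {X : Type*} (φ : ℝ → X → X) (x : X) : Prop := ∀ t : ℝ, φ t x = x

/-- A reparameterization: an increasing homeomorphism of `ℝ` fixing `0`. -/
def Reparam (h : ℝ → ℝ) : Prop :=
  StrictMono h ∧ Continuous h ∧ Function.Surjective h ∧ h 0 = 0

/-- A reparameterization with rests: continuous, surjective, non-decreasing, fixing `0`. -/
def ReparamRest (h : ℝ → ℝ) : Prop :=
  Monotone h ∧ Continuous h ∧ Function.Surjective h ∧ h 0 = 0

/-- Positive expansiveness in the sense of Bowen–Walters. -/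
def PosExpansive {X : Type*} [MetricSpace X] (φ : ℝ → X → X) : Prop :=
  ∀ ε > (0 : ℝ), ∃ δ > (0 : ℝ), ∀ x y : X, ∀ h : ℝ → ℝ, Reparam h →
    (∀ t ≥ (0 : ℝ), dist (φ (h t) x) (φ t y) < δ) →
    ∃ s : ℝ, |s| ≤ ε ∧ y = φ s x

/-- The orbit of a point under the flow. -/
def flowOrbit {X : Type*} (φ : ℝ → X → X) (x : X) : Set X := Set.range fun t => φ t x

namespace PEAux

set_option linter.unusedSectionVars false

variable {X : Type*} [MetricSpace X] [CompactSpace X] {φ : ℝ → X → X}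

lemma flow_zero (hφ : IsFlow φ) (x : X) : φ 0 x = x := hφ.2.1 x

lemma flow_add (hφ : IsFlow φ) (s t : ℝ) (x : X) : φ (s + t) x = φ s (φ t x) := hφ.2.2 s t x

lemma flow_cancel (hφ : IsFlow φ) (t : ℝ) (x : X) : φ (-t) (φ t x) = x := by
  rw [← flow_add hφ, neg_add_cancel, flow_zero hφ]

lemma flow_cont1 (hφ : IsFlow φ) (t : ℝ) : Continuous fun x : X => φ t x :=
  hφ.1.comp (continuous_const.prodMk continuous_id)

lemma flow_cont2 (hφ : IsFlow φ) (x : X) : Continuous fun t : ℝ => φ t x :=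
  hφ.1.comp (continuous_id.prodMk continuous_const)

/-- Uniform continuity of the flow over a compact time interval. -/
lemma flow_uc (hφ : IsFlow φ) (T ε : ℝ) (hε : 0 < ε) :
    ∃ δ > 0, ∀ s : ℝ, |s| ≤ T → ∀ x y : X, dist x y < δ → dist (φ s x) (φ s y) < ε := by
  have hK : IsCompact ((Icc (-T) T) ×ˢ (univ : Set X)) := isCompact_Icc.prod isCompact_univ
  have hf : UniformContinuousOn (fun p : ℝ × X => φ p.1 p.2) ((Icc (-T) T) ×ˢ univ) :=
    hK.uniformContinuousOn_of_continuous hφ.1.continuousOn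
  rw [Metric.uniformContinuousOn_iff] at hf
  obtain ⟨δ, hδ, H⟩ := hf ε hε
  refine ⟨δ, hδ, ?_⟩
  intro s hs x y hxy
  have habs := abs_le.mp hs
  have h1 : ((s, x) : ℝ × X) ∈ (Icc (-T) T) ×ˢ (univ : Set X) :=
    ⟨⟨habs.1, habs.2⟩, mem_univ _⟩
  have h2 : ((s, y) : ℝ × X) ∈ (Icc (-T) T) ×ˢ (univ : Set X) :=
    ⟨⟨habs.1, habs.2⟩, mem_univ _⟩
  have hd : dist ((s, x) : ℝ × X) ((s, y) : ℝ × X) < δ := by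
    rw [Prod.dist_eq]
    simp only [dist_self]
    exact max_lt hδ hxy
  exact H _ h1 _ h2 hd

/-- Uniform smallness of displacement over small times. -/
lemma flow_omega (hφ : IsFlow φ) (ε : ℝ) (hε : 0 < ε) :
    ∃ η, 0 < η ∧ η ≤ 1 ∧ ∀ (z : X) (β : ℝ), |β| ≤ η → dist z (φ β z) < ε := by
  have hgc : Continuous fun p : ℝ × X => dist p.2 (φ p.1 p.2) := continuous_snd.dist hφ.1
  have hK : IsCompact ((Icc (-1 : ℝ) 1) ×ˢ (univ : Set X)) := isCompact_Icc.prod isCompact_univ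
  have hf : UniformContinuousOn (fun p : ℝ × X => dist p.2 (φ p.1 p.2))
      ((Icc (-1 : ℝ) 1) ×ˢ univ) := hK.uniformContinuousOn_of_continuous hgc.continuousOn
  rw [Metric.uniformContinuousOn_iff] at hf
  obtain ⟨δ, hδ, H⟩ := hf ε hε
  refine ⟨min (δ / 2) 1, by positivity, min_le_right _ _, ?_⟩
  intro z β hβ
  have hβ1 : |β| ≤ 1 := le_trans hβ (min_le_right _ _)
  have habs := abs_le.mp hβ1
  have h1 : ((β, z) : ℝ × X) ∈ (Icc (-1 : ℝ) 1) ×ˢ (univ : Set X) :=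
    ⟨⟨habs.1, habs.2⟩, mem_univ _⟩
  have h2 : ((0, z) : ℝ × X) ∈ (Icc (-1 : ℝ) 1) ×ˢ (univ : Set X) :=
    ⟨⟨by norm_num, by norm_num⟩, mem_univ _⟩
  have hd : dist ((β, z) : ℝ × X) ((0, z) : ℝ × X) < δ := by
    rw [Prod.dist_eq]
    have : dist β 0 < δ := by
      rw [Real.dist_eq, sub_zero]
      exact lt_of_le_of_lt (le_trans hβ (min_le_left _ _)) (by linarith)
    simp only [dist_self]
    exact max_lt this hδ
  have := H _ h1 _ h2 hd
  rw [Real.dist_eq] at this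
  rw [show φ (0 : ℝ) z = z from flow_zero hφ z, dist_self, sub_zero,
    abs_of_nonneg dist_nonneg] at this
  exact this


/-- No small periods: there is `T > 0` such that no point has a period in `(0, T]`. -/
lemma no_small_period (hφ : IsFlow φ) (hns : ∀ x : X, ¬ IsSingular φ x) :
    ∃ T > 0, ∀ (z : X) (β : ℝ), 0 < β → β ≤ T → φ β z ≠ z := by
  by_contra hcon
  push_neg at hcon
  have h' : ∀ n : ℕ, ∃ p : X × ℝ, 0 < p.2 ∧ p.2 ≤ 1 / (n + 1) ∧ φ p.2 p.1 = p.1 := by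
    intro n
    obtain ⟨z, β, hβ0, hβle, hz⟩ := hcon (1 / (n + 1)) (by positivity)
    exact ⟨(z, β), hβ0, hβle, hz⟩
  choose u hu1 hu2 hu3 using h'
  obtain ⟨z, -, k, hk, hzk⟩ := isCompact_univ.tendsto_subseq (fun n => mem_univ (u n).1)
  set β : ℕ → ℝ := fun n => (u (k n)).2 with hβ
  have hβ0 : ∀ n, 0 < β n := fun n => hu1 _
  have hβle : ∀ n, β n ≤ 1 / (n + 1) := by
    intro n
    refine le_trans (hu2 (k n)) ?_
    have hkn : (n : ℝ) ≤ (k n : ℝ) := by exact_mod_cast hk.le_apply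
    have : (n : ℝ) + 1 ≤ (k n : ℝ) + 1 := by linarith
    exact one_div_le_one_div_of_le (by positivity) this
  have hβ0' : Tendsto β atTop (𝓝 0) := by
    refine squeeze_zero (fun n => (hβ0 n).le) hβle ?_
    exact tendsto_one_div_add_atTop_nhds_zero_nat
  have hmul : ∀ n (m : ℕ), φ (m * β n) (u (k n)).1 = (u (k n)).1 := by
    intro n m
    induction m with
    | zero => simpa using flow_zero hφ _
    | succ m ih =>
      have : ((m : ℝ) + 1) * β n = β n + m * β n := by ring
      push_cast
      rw [this, flow_add hφ, ih, hu3]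
  have hfix : ∀ t : ℝ, 0 ≤ t → φ t z = z := by
    intro t ht
    set m : ℕ → ℕ := fun n => Nat.floor (t / β n) with hm
    have hle : ∀ n, (m n : ℝ) * β n ≤ t := by
      intro n
      have h1 : (m n : ℝ) ≤ t / β n := Nat.floor_le (div_nonneg ht (hβ0 n).le)
      calc (m n : ℝ) * β n ≤ (t / β n) * β n := by
            exact mul_le_mul_of_nonneg_right h1 (hβ0 n).le
      _ = t := div_mul_cancel₀ t (hβ0 n).ne'
    have hgt : ∀ n, t < (m n : ℝ) * β n + β n := by
      intro n
      have h1 : t / β n < (m n : ℝ) + 1 := Nat.lt_floor_add_one _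
      have := (div_lt_iff₀ (hβ0 n)).mp h1
      linarith [this]
    have htend : Tendsto (fun n => (m n : ℝ) * β n) atTop (𝓝 t) := by
      rw [tendsto_iff_dist_tendsto_zero]
      refine squeeze_zero (fun n => dist_nonneg) (fun n => ?_) hβ0'
      rw [Real.dist_eq, abs_le]
      constructor
      · linarith [hgt n]
      · linarith [hle n, (hβ0 n).le]
    have h2 : Tendsto (fun n => φ ((m n : ℝ) * β n) (u (k n)).1) atTop (𝓝 (φ t z)) := by
      have : Tendsto (fun n => (((m n : ℝ) * β n), (u (k n)).1)) atTop (𝓝 (t, z)) :=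
        htend.prodMk_nhds hzk
      exact ((hφ.1.continuousAt).tendsto.comp this)
    have h3 : Tendsto (fun n => φ ((m n : ℝ) * β n) (u (k n)).1) atTop (𝓝 z) := by
      have hzk' : Tendsto (fun n => (u (k n)).1) atTop (𝓝 z) := hzk
      simpa only [hmul] using hzk'
    exact tendsto_nhds_unique h2 h3
  refine hns z ?_
  intro t
  rcases le_or_gt 0 t with ht | ht
  · exact hfix t ht
  · have : φ t (φ (-t) z) = z := by
      rw [← flow_add hφ]
      simpa using flow_zero hφ z
    rw [hfix (-t) (by linarith)] at this
    exact this

/-- Minimum separation of `φ T` from the identity. -/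
lemma flow_min_dist (hφ : IsFlow φ) [Nonempty X] (T : ℝ) (hT : ∀ z : X, φ T z ≠ z) :
    ∃ ρ > 0, ∀ z : X, ρ ≤ dist z (φ T z) := by
  have hc : Continuous fun z : X => dist z (φ T z) := continuous_id.dist (flow_cont1 hφ T)
  obtain ⟨z₀, -, hz₀⟩ := isCompact_univ.exists_isMinOn univ_nonempty hc.continuousOn
  refine ⟨dist z₀ (φ T z₀), ?_, fun z => hz₀ (mem_univ z)⟩
  have : z₀ ≠ φ T z₀ := fun h => hT z₀ h.symm
  exact dist_pos.mpr this

/-- Minimum motion over a band of times `a ≤ |β| ≤ b`. -/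
lemma flow_band_min (hφ : IsFlow φ) (hns : ∀ x : X, ¬ IsSingular φ x) [Nonempty X]
    (a b : ℝ) (ha : 0 < a) (hab : a ≤ b)
    (hT : ∀ (z : X) (β : ℝ), 0 < β → β ≤ b → φ β z ≠ z) :
    ∃ ρ > 0, ∀ (z : X) (β : ℝ), a ≤ |β| → |β| ≤ b → ρ ≤ dist z (φ β z) := by
  classical
  set K : Set ℝ := Icc (-b) (-a) ∪ Icc a b with hK
  have hKc : IsCompact K := isCompact_Icc.union isCompact_Icc
  have hKne : K.Nonempty := ⟨a, Or.inr ⟨le_refl a, hab⟩⟩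
  have hmem : ∀ β : ℝ, β ∈ K ↔ (a ≤ |β| ∧ |β| ≤ b) := by
    intro β
    constructor
    · rintro (⟨h1, h2⟩ | ⟨h1, h2⟩)
      · have hβ : β < 0 := lt_of_le_of_lt h2 (by linarith)
        rw [abs_of_neg hβ]
        constructor <;> linarith
      · have hβ : 0 < β := lt_of_lt_of_le ha h1
        rw [abs_of_pos hβ]
        exact ⟨h1, h2⟩
    · rintro ⟨h1, h2⟩
      rcases le_or_gt 0 β with hβ | hβ
      · right
        rw [abs_of_nonneg hβ] at h1 h2
        exact ⟨h1, h2⟩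
      · left
        rw [abs_of_neg hβ] at h1 h2
        constructor <;> linarith
  have hc : Continuous fun p : ℝ × X => dist p.2 (φ p.1 p.2) := continuous_snd.dist hφ.1
  have hKXc : IsCompact (K ×ˢ (univ : Set X)) := hKc.prod isCompact_univ
  have hKXne : (K ×ˢ (univ : Set X)).Nonempty :=
    ⟨(a, Classical.arbitrary X), ⟨Or.inr ⟨le_refl a, hab⟩, mem_univ _⟩⟩
  obtain ⟨⟨β₀, z₀⟩, hmem₀, hmin⟩ := hKXc.exists_isMinOn hKXne hc.continuousOn
  have hβ₀ : a ≤ |β₀| ∧ |β₀| ≤ b := (hmem β₀).mp hmem₀.1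
  have hpos : 0 < dist z₀ (φ β₀ z₀) := by
    rw [dist_pos]
    intro h
    rcases abs_cases β₀ with ⟨he, h0⟩ | ⟨he, h0⟩
    · exact hT z₀ β₀ (lt_of_lt_of_le ha (he ▸ hβ₀.1)) (he ▸ hβ₀.2) h.symm
    · have hneg : φ (-β₀) z₀ = z₀ := by
        have : φ (-β₀) (φ β₀ z₀) = z₀ := flow_cancel hφ β₀ z₀
        rw [← h] at this
        exact this
      exact hT z₀ (-β₀) (lt_of_lt_of_le ha (he ▸ hβ₀.1)) (he ▸ hβ₀.2) hneg
  refine ⟨dist z₀ (φ β₀ z₀), hpos, fun z β h1 h2 => ?_⟩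
  exact hmin (show ((β, z) : ℝ × X) ∈ K ×ˢ (univ : Set X) from ⟨(hmem β).mpr ⟨h1, h2⟩, mem_univ z⟩)
/-- Rational approximation from the right. -/
lemma rat_approx_right (t : ℝ) :
    ∃ q : ℕ → ℚ, (∀ j, t < (q j : ℝ)) ∧ Tendsto (fun j => (q j : ℝ)) atTop (𝓝 t) := by
  have h : ∀ j : ℕ, ∃ q : ℚ, t < (q : ℝ) ∧ (q : ℝ) < t + 1 / (j + 1) := by
    intro j
    obtain ⟨q, hq1, hq2⟩ := exists_rat_btwn (show t < t + 1 / (j + 1) by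
      have : (0:ℝ) < 1 / (j+1) := by positivity
      linarith)
    exact ⟨q, hq1, hq2⟩
  choose q hq1 hq2 using h
  refine ⟨q, hq1, ?_⟩
  rw [tendsto_iff_dist_tendsto_zero]
  refine squeeze_zero (fun j => dist_nonneg) (fun j => ?_) tendsto_one_div_add_atTop_nhds_zero_nat
  rw [Real.dist_eq, abs_le]
  have h2 : (0:ℝ) < 1/((j:ℝ)+1) := by positivity
  have h3 := hq1 j
  have h4 := hq2 j
  constructor
  · linarith
  · linarith

/-- Extension of a monotone `1`-Lipschitz function from `ℚ` to `ℝ`. -/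
lemma extendQ (g : ℚ → ℝ) (hmono : ∀ q q' : ℚ, q ≤ q' → g q ≤ g q')
    (hlip : ∀ q q' : ℚ, q ≤ q' → g q' - g q ≤ (q' : ℝ) - q)
    (hneg : ∀ q : ℚ, q ≤ 0 → g q = 0) :
    ∃ G : ℝ → ℝ, Monotone G ∧ Continuous G ∧ (∀ q : ℚ, G q = g q) ∧
      (∀ t : ℝ, t ≤ 0 → G t = 0) ∧ (∀ t t' : ℝ, t ≤ t' → G t' - G t ≤ t' - t) := by
  classical
  set G : ℝ → ℝ := fun t => sSup (g '' {q : ℚ | (q : ℝ) ≤ t}) with hG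
  have hne : ∀ t : ℝ, (g '' {q : ℚ | (q : ℝ) ≤ t}).Nonempty := by
    intro t
    obtain ⟨q, hq⟩ := exists_rat_lt t
    exact ⟨g q, ⟨q, hq.le, rfl⟩⟩
  have hbdd : ∀ t : ℝ, BddAbove (g '' {q : ℚ | (q : ℝ) ≤ t}) := by
    intro t
    obtain ⟨Q, hQ⟩ := exists_rat_gt t
    refine ⟨g Q, ?_⟩
    rintro v ⟨q, hq, rfl⟩
    exact hmono q Q (by exact_mod_cast le_trans hq hQ.le)
  have hGq : ∀ q : ℚ, G q = g q := by
    intro q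
    refine IsGreatest.csSup_eq ⟨⟨q, show ((q:ℝ) ≤ (q:ℝ)) from le_refl _, rfl⟩, ?_⟩
    rintro v ⟨q', hq', rfl⟩
    exact hmono q' q (by exact_mod_cast hq')
  have hGmono : Monotone G := by
    intro t t' htt'
    exact csSup_le_csSup (hbdd t') (hne t) (image_mono (f := g) (fun q hq => le_trans hq htt'))
  have hGlb : ∀ (t : ℝ) (q : ℚ), (q:ℝ) ≤ t → g q ≤ G t := by
    intro t q hq
    exact le_csSup (hbdd t) ⟨q, hq, rfl⟩
  have hGub : ∀ (t : ℝ) (q : ℚ), t ≤ (q:ℝ) → G t ≤ g q := by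
    intro t q hq
    refine csSup_le (hne t) ?_
    rintro v ⟨q', hq', rfl⟩
    exact hmono q' q (by exact_mod_cast le_trans hq' hq)
  have hGlip : ∀ t t' : ℝ, t ≤ t' → G t' - G t ≤ t' - t := by
    intro t t' htt'
    have key : ∀ ε > (0:ℝ), G t' - G t ≤ t' - t + ε := by
      intro ε hε
      obtain ⟨r, hr1, hr2⟩ := exists_rat_btwn (show t - ε < t by linarith)
      have hrG : g r ≤ G t := hGlb t r hr2.le
      have hub : G t' ≤ G t + (t' - t + ε) := by
        refine csSup_le (hne t') ?_
        rintro v ⟨q', hq', rfl⟩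
        rcases le_or_gt (q' : ℝ) (r : ℝ) with h | h
        · have : g q' ≤ g r := hmono q' r (by exact_mod_cast h)
          have h3 : (0:ℝ) ≤ t' - t + ε := by linarith
          linarith
        · have : g q' - g r ≤ (q' : ℝ) - r := hlip r q' (by exact_mod_cast h.le)
          have : g q' ≤ g r + ((q':ℝ) - r) := by linarith
          have h4 : (q' : ℝ) - r ≤ t' - t + ε := by
            have := hq'
            simp only [mem_setOf_eq] at this
            linarith
          linarith
      linarith
    by_contra hcon
    push_neg at hcon
    have := key ((G t' - G t - (t' - t)) / 2) (by linarith)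
    linarith
  have hGneg : ∀ t : ℝ, t ≤ 0 → G t = 0 := by
    intro t ht
    refine IsGreatest.csSup_eq ?_
    constructor
    · obtain ⟨q, hq⟩ := exists_rat_lt t
      refine ⟨q, hq.le, ?_⟩
      exact hneg q (by exact_mod_cast le_trans hq.le ht)
    · rintro v ⟨q, hq, rfl⟩
      rw [hneg q (by exact_mod_cast le_trans hq ht)]
  have hGcont : Continuous G := by
    have : LipschitzWith 1 G := by
      refine LipschitzWith.of_dist_le_mul ?_
      intro t t'
      rw [Real.dist_eq, Real.dist_eq]
      push_cast
      rw [one_mul]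
      have key : ∀ a b : ℝ, |G b - G a| ≤ |b - a| := by
        intro a b
        rcases le_total a b with h | h
        · rw [abs_of_nonneg (by linarith [hGmono h] : (0:ℝ) ≤ G b - G a),
            abs_of_nonneg (by linarith : (0:ℝ) ≤ b - a)]
          exact hGlip a b h
        · rw [abs_of_nonpos (by linarith [hGmono h] : G b - G a ≤ 0),
            abs_of_nonpos (by linarith : b - a ≤ 0)]
          have := hGlip b a h
          linarith
      first
      | exact le_trans (key t t') (le_of_eq (abs_sub_comm _ _))
      | exact le_trans (key t' t) (le_of_eq (abs_sub_comm _ _))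
      | exact key t t'
      | exact key t' t
    exact this.continuous
  exact ⟨G, hGmono, hGcont, hGq, hGneg, hGlip⟩

/-- A bounded coordinate in a two–sided shadowing forces a point whose forward orbit
is trapped in a small set, contradicting absence of small periods. -/
lemma tail_contra (hφ : IsFlow φ) (That Λ ρhat c₂ μhat : ℝ)
    (hμhat : 0 < μhat)
    (hρhat : ∀ z : X, ρhat ≤ dist z (φ That z))
    (hc₂ : ∀ (z : X) (β : ℝ), |β| ≤ μhat → dist z (φ β z) ≤ c₂)
    (hlev2 : 2 * Λ + c₂ < ρhat) (hThat : 0 < That)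
    (P Q : X) (G H : ℝ → ℝ) (hGm : Monotone G) (hHm : Monotone H)
    (hGc : Continuous G)
    (hlev : ∀ t, 0 ≤ t → dist (φ (G t) P) (φ (H t) Q) ≤ Λ)
    (hsum : ∀ t, 0 ≤ t → G t + H t = t)
    (hHb : ∃ M, ∀ t, H t ≤ M) : False := by
  classical
  obtain ⟨M, hM⟩ := hHb
  -- least upper bound of H
  have hbdd : BddAbove (Set.range H) := ⟨M, by rintro v ⟨t, rfl⟩; exact hM t⟩
  set ℓ : ℝ := ⨆ t, H t with hℓ
  have hHle : ∀ t, H t ≤ ℓ := fun t => le_ciSup hbdd t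
  have hex : ∃ t₀, ℓ - μhat < H t₀ := by
    by_contra hcon
    push_neg at hcon
    have : ℓ ≤ ℓ - μhat := ciSup_le hcon
    linarith
  obtain ⟨t₀, ht₀⟩ := hex
  set R : ℝ := max t₀ 0 with hR
  have hR0 : 0 ≤ R := le_max_right _ _
  have hHtail : ∀ t, R ≤ t → ℓ - μhat < H t ∧ H t ≤ ℓ := by
    intro t ht
    exact ⟨lt_of_lt_of_le ht₀ (hHm (le_trans (le_max_left _ _) ht)), hHle t⟩
  -- G is unbounded
  have hGbig : ∀ t, 0 ≤ t → t - ℓ ≤ G t := by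
    intro t ht
    have := hsum t ht
    have := hHle t
    linarith
  -- find t'' ≥ R with G t'' = G R + That
  have hexists : ∃ t'', R ≤ t'' ∧ G t'' = G R + That := by
    set t₁ : ℝ := max R (G R + That + ℓ) with ht₁
    have ht₁R : R ≤ t₁ := le_max_left _ _
    have h1 : G R + That ≤ G t₁ := by
      have h2 : 0 ≤ t₁ := le_trans hR0 ht₁R
      have := hGbig t₁ h2
      have h3 : G R + That + ℓ ≤ t₁ := le_max_right _ _
      linarith
    have hmem : G R + That ∈ Icc (G R) (G t₁) := ⟨by linarith, h1⟩
    have hsub := intermediate_value_Icc ht₁R hGc.continuousOn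
    obtain ⟨t'', ht''mem, ht''⟩ := hsub hmem
    exact ⟨t'', ht''mem.1, ht''⟩
  obtain ⟨t'', hRt'', hGt''⟩ := hexists
  set z : X := φ (G R) P with hz
  have key : dist z (φ That z) ≤ 2 * Λ + c₂ := by
    have e1 : φ That z = φ (G t'') P := by
      rw [hz, ← flow_add hφ, hGt'', add_comm]
    have hHd : H t'' - H R ∈ Icc (0:ℝ) μhat := by
      obtain ⟨h1, h2⟩ := hHtail t'' hRt''
      obtain ⟨h3, h4⟩ := hHtail R (le_refl R)
      constructor
      · have := hHm hRt''
        linarith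
      · linarith
    have e2 : φ (H t'') Q = φ (H t'' - H R) (φ (H R) Q) := by
      rw [← flow_add hφ]
      ring_nf
    calc dist z (φ That z)
        = dist (φ (G R) P) (φ (G t'') P) := by rw [e1]
      _ ≤ dist (φ (G R) P) (φ (H R) Q) + dist (φ (H R) Q) (φ (H t'') Q)
            + dist (φ (H t'') Q) (φ (G t'') P) := dist_triangle4 _ _ _ _
      _ ≤ Λ + c₂ + Λ := by
          gcongr
          · exact hlev R hR0
          · rw [e2]
            refine hc₂ _ _ ?_
            rw [abs_of_nonneg hHd.1]
            exact hHd.2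
          · rw [dist_comm]
            exact hlev t'' (le_trans hR0 hRt'')
      _ = 2 * Λ + c₂ := by ring
  have := hρhat z
  linarith
set_option maxHeartbeats 1600000 in
/-- Uniform orbit–shadowing extraction. -/
lemma extraction (hφ : IsFlow φ)
    (That δ₂ Λ θ ρhat c₁ c₂ μ μhat : ℝ)
    (hThat : 0 < That) (hθ : 0 < θ) (hΛ0 : 0 ≤ Λ)
    (hPE : ∀ x y : X, ∀ h : ℝ → ℝ, Reparam h →
      (∀ t ≥ (0:ℝ), dist (φ (h t) x) (φ t y) < δ₂) → ∃ s, |s| ≤ That ∧ y = φ s x)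
    (hρhat : ∀ z : X, ρhat ≤ dist z (φ That z))
    (hμ : 0 < μ) (hc₁ : ∀ (z : X) (β : ℝ), |β| ≤ μ → dist z (φ β z) ≤ c₁)
    (hμhat : 0 < μhat) (hc₂ : ∀ (z : X) (β : ℝ), |β| ≤ μhat → dist z (φ β z) ≤ c₂)
    (hlev1 : Λ + 2 * c₁ < δ₂) (hlev2 : 2 * Λ + c₂ < ρhat) :
    ∃ Tstar > (0:ℝ), ∀ (A B : X) (S : ℝ) (al be : ℝ → ℝ),
      0 ≤ S → Monotone al → Monotone be →
      al 0 = 0 → be 0 = 0 →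
      (∀ u, 0 ≤ u → u ≤ S → al u + be u = u) →
      (∀ u, 0 ≤ u → u ≤ S → dist (φ (al u) A) (φ (be u) B) ≤ Λ) →
      Tstar ≤ al S → Tstar ≤ be S →
      ∃ s, |s| ≤ That ∧ dist B (φ s A) < θ := by
  classical
  by_contra hcon
  have H : ∀ n : ℕ, ∃ A : X, ∃ B : X, ∃ S : ℝ, ∃ al : ℝ → ℝ, ∃ be : ℝ → ℝ,
      (0 ≤ S) ∧ Monotone al ∧ Monotone be ∧ al 0 = 0 ∧ be 0 = 0 ∧
      (∀ u, 0 ≤ u → u ≤ S → al u + be u = u) ∧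
      (∀ u, 0 ≤ u → u ≤ S → dist (φ (al u) A) (φ (be u) B) ≤ Λ) ∧
      ((n:ℝ) + 1 ≤ al S) ∧ ((n:ℝ) + 1 ≤ be S) ∧
      (∀ s : ℝ, |s| ≤ That → θ ≤ dist B (φ s A)) := by
    intro n
    by_contra hno
    apply hcon
    refine ⟨(n:ℝ) + 1, by positivity, ?_⟩
    intro A B S al be hS hma hmb ha0 hb0 hsum hlev hTa hTb
    by_contra hno2
    exact hno ⟨A, B, S, al, be, hS, hma, hmb, ha0, hb0, hsum, hlev, hTa, hTb,
      fun s hs => le_of_not_gt (fun hlt => hno2 ⟨s, hs, hlt⟩)⟩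
  choose A B S al be hS hma hmb ha0 hb0 hsum hlev hTa hTb hfar using H
  have halnn : ∀ n u, 0 ≤ u → 0 ≤ al n u := by
    intro n u hu
    have h := hma n hu
    rw [ha0 n] at h
    exact h
  have hbenn : ∀ n u, 0 ≤ u → 0 ≤ be n u := by
    intro n u hu
    have h := hmb n hu
    rw [hb0 n] at h
    exact h
  have halub : ∀ n u, 0 ≤ u → u ≤ S n → al n u ≤ u := by
    intro n u h1 h2
    have h3 := hsum n u h1 h2
    have h4 := hbenn n u h1
    linarith
  have hbeub : ∀ n u, 0 ≤ u → u ≤ S n → be n u ≤ u := by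
    intro n u h1 h2
    have h3 := hsum n u h1 h2
    have h4 := halnn n u h1
    linarith
  have hSbig : ∀ n : ℕ, 2 * (n:ℝ) + 2 ≤ S n := by
    intro n
    have h1 := hTa n
    have h2 := hTb n
    have h3 := hsum n (S n) (hS n) (le_refl _)
    linarith
  set uc : ℕ → ℚ → ℝ := fun n q => min (max (q:ℝ) 0) (S n) with huc
  have huc0 : ∀ n q, 0 ≤ uc n q := fun n q => le_min (le_max_right _ _) (hS n)
  have hucS : ∀ n q, uc n q ≤ S n := fun n q => min_le_right _ _
  have hucq : ∀ n q, uc n q ≤ max (q:ℝ) 0 := fun n q => min_le_left _ _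
  set aQ : ℕ → ℚ → ℝ := fun n q => al n (uc n q) with haQdef
  set bQ : ℕ → ℚ → ℝ := fun n q => be n (uc n q) with hbQdef
  have haQmem : ∀ (n : ℕ) (q : ℚ), aQ n q ∈ Icc (0:ℝ) (max (q:ℝ) 0) :=
    fun n q => ⟨halnn n _ (huc0 n q),
      le_trans (halub n _ (huc0 n q) (hucS n q)) (hucq n q)⟩
  have hbQmem : ∀ (n : ℕ) (q : ℚ), bQ n q ∈ Icc (0:ℝ) (max (q:ℝ) 0) :=
    fun n q => ⟨hbenn n _ (huc0 n q),
      le_trans (hbeub n _ (huc0 n q) (hucS n q)) (hucq n q)⟩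
  let Box : ℚ → Set (ℝ × ℝ) := fun q => (Icc (0:ℝ) (max (q:ℝ) 0)) ×ˢ (Icc (0:ℝ) (max (q:ℝ) 0))
  haveI hBoxC : ∀ q : ℚ, CompactSpace (Box q) := fun q =>
    isCompact_iff_compactSpace.mp (isCompact_Icc.prod isCompact_Icc)
  let sq : ℕ → X × X × (∀ q : ℚ, Box q) := fun n =>
    ⟨A n, B n, fun q => ⟨(aQ n q, bQ n q), ⟨haQmem n q, hbQmem n q⟩⟩⟩
  obtain ⟨L, -, k, hk, hLk⟩ := isCompact_univ.tendsto_subseq (fun n => mem_univ (sq n))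
  have hA : Tendsto (fun n => A (k n)) atTop (𝓝 L.1) :=
    (continuous_fst.tendsto L).comp hLk
  have hB : Tendsto (fun n => B (k n)) atTop (𝓝 L.2.1) :=
    ((continuous_fst.comp continuous_snd).tendsto L).comp hLk
  set aL : ℚ → ℝ := fun q => ((L.2.2 q : ℝ × ℝ)).1 with haLdef
  set bL : ℚ → ℝ := fun q => ((L.2.2 q : ℝ × ℝ)).2 with hbLdef
  have haQt : ∀ q : ℚ, Tendsto (fun n => aQ (k n) q) atTop (𝓝 (aL q)) := by
    intro q
    have c : Continuous fun p : X × X × (∀ q' : ℚ, Box q') => ((p.2.2 q : ℝ × ℝ)).1 :=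
      continuous_fst.comp (continuous_subtype_val.comp
        ((continuous_apply q).comp (continuous_snd.comp continuous_snd)))
    exact (c.tendsto L).comp hLk
  have hbQt : ∀ q : ℚ, Tendsto (fun n => bQ (k n) q) atTop (𝓝 (bL q)) := by
    intro q
    have c : Continuous fun p : X × X × (∀ q' : ℚ, Box q') => ((p.2.2 q : ℝ × ℝ)).2 :=
      continuous_snd.comp (continuous_subtype_val.comp
        ((continuous_apply q).comp (continuous_snd.comp continuous_snd)))
    exact (c.tendsto L).comp hLk
  have hSk : ∀ r : ℝ, ∀ᶠ n in atTop, r ≤ S (k n) := by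
    intro r
    have h1 : Tendsto (fun n : ℕ => 2 * (n:ℝ) + 2) atTop atTop := by
      apply tendsto_atTop_add_const_right
      exact tendsto_natCast_atTop_atTop.const_mul_atTop (by norm_num)
    have h2 : Tendsto (fun n => S (k n)) atTop atTop :=
      tendsto_atTop_mono (fun n => hSbig (k n)) (h1.comp hk.tendsto_atTop)
    exact h2.eventually_ge_atTop r
  have hucmono : ∀ n (q q' : ℚ), q ≤ q' → uc n q ≤ uc n q' := by
    intro n q q' hqq
    exact min_le_min (max_le_max (by exact_mod_cast hqq) le_rfl) le_rfl
  have hmonoQa : ∀ q q' : ℚ, q ≤ q' → aL q ≤ aL q' := fun q q' hqq =>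
    le_of_tendsto_of_tendsto' (haQt q) (haQt q')
      (fun n => hma (k n) (hucmono (k n) q q' hqq))
  have hmonoQb : ∀ q q' : ℚ, q ≤ q' → bL q ≤ bL q' := fun q q' hqq =>
    le_of_tendsto_of_tendsto' (hbQt q) (hbQt q')
      (fun n => hmb (k n) (hucmono (k n) q q' hqq))
  have hsumQ : ∀ q : ℚ, aL q + bL q = max (q:ℝ) 0 := by
    intro q
    have h1 : Tendsto (fun n => aQ (k n) q + bQ (k n) q) atTop (𝓝 (aL q + bL q)) :=
      (haQt q).add (hbQt q)
    have h2 : ∀ᶠ n in atTop, aQ (k n) q + bQ (k n) q = max (q:ℝ) 0 := by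
      filter_upwards [hSk (max (q:ℝ) 0)] with n hn
      have e : uc (k n) q = max (q:ℝ) 0 := min_eq_left hn
      have h3 := hsum (k n) (uc (k n) q) (huc0 _ _) (hucS _ _)
      calc aQ (k n) q + bQ (k n) q = uc (k n) q := h3
        _ = _ := e
    have h2' : (fun n => aQ (k n) q + bQ (k n) q) =ᶠ[atTop] (fun _ => max (q:ℝ) 0) := h2
    have h4 : Tendsto (fun n => aQ (k n) q + bQ (k n) q) atTop (𝓝 (max (q:ℝ) 0)) :=
      Tendsto.congr' h2'.symm tendsto_const_nhds
    exact tendsto_nhds_unique h1 h4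
  have hlevQ : ∀ q : ℚ, dist (φ (aL q) L.1) (φ (bL q) L.2.1) ≤ Λ := by
    intro q
    have h1 : Tendsto (fun n => φ (aQ (k n) q) (A (k n))) atTop (𝓝 (φ (aL q) L.1)) :=
      (hφ.1.tendsto _).comp ((haQt q).prodMk_nhds hA)
    have h2 : Tendsto (fun n => φ (bQ (k n) q) (B (k n))) atTop (𝓝 (φ (bL q) L.2.1)) :=
      (hφ.1.tendsto _).comp ((hbQt q).prodMk_nhds hB)
    refine le_of_tendsto (h1.dist h2) (Eventually.of_forall fun n => ?_)
    exact hlev (k n) _ (huc0 _ _) (hucS _ _)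
  have hfarQ : ∀ s : ℝ, |s| ≤ That → θ ≤ dist L.2.1 (φ s L.1) := by
    intro s hs
    have h1 : Tendsto (fun n => φ s (A (k n))) atTop (𝓝 (φ s L.1)) :=
      (hφ.1.tendsto _).comp (tendsto_const_nhds.prodMk_nhds hA)
    exact ge_of_tendsto (hB.dist h1) (Eventually.of_forall fun n => hfar (k n) s hs)
  have hnegQa : ∀ q : ℚ, q ≤ 0 → aL q = 0 := by
    intro q hq
    have hmem := (L.2.2 q).2.1
    have hmax : max (q:ℝ) 0 = 0 := max_eq_right (by exact_mod_cast hq)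
    have h1 : aL q ≤ 0 := by
      have := hmem.2
      rw [hmax] at this
      exact this
    exact le_antisymm h1 hmem.1
  have hnegQb : ∀ q : ℚ, q ≤ 0 → bL q = 0 := by
    intro q hq
    have hmem := (L.2.2 q).2.2
    have hmax : max (q:ℝ) 0 = 0 := max_eq_right (by exact_mod_cast hq)
    have h1 : bL q ≤ 0 := by
      have := hmem.2
      rw [hmax] at this
      exact this
    exact le_antisymm h1 hmem.1
  have hmaxlip : ∀ a b : ℝ, a ≤ b → max b 0 - max a 0 ≤ b - a := by
    intro a b hab
    have h1 : b ≤ max a 0 + (b - a) := by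
      have := le_max_left a (0:ℝ); linarith
    have h2 : (0:ℝ) ≤ max a 0 + (b - a) := by
      have := le_max_right a (0:ℝ); linarith
    have h3 := max_le h1 h2
    linarith
  have hlipQa : ∀ q q' : ℚ, q ≤ q' → aL q' - aL q ≤ (q':ℝ) - q := by
    intro q q' h
    have s1 := hsumQ q
    have s2 := hsumQ q'
    have hb := hmonoQb q q' h
    have h4 := hmaxlip (q:ℝ) (q':ℝ) (by exact_mod_cast h)
    linarith
  have hlipQb : ∀ q q' : ℚ, q ≤ q' → bL q' - bL q ≤ (q':ℝ) - q := by
    intro q q' h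
    have s1 := hsumQ q
    have s2 := hsumQ q'
    have hb := hmonoQa q q' h
    have h4 := hmaxlip (q:ℝ) (q':ℝ) (by exact_mod_cast h)
    linarith
  obtain ⟨aR, maR, caR, haRq, haRneg, haRlip⟩ := extendQ aL hmonoQa hlipQa hnegQa
  obtain ⟨bR, mbR, cbR, hbRq, hbRneg, hbRlip⟩ := extendQ bL hmonoQb hlipQb hnegQb
  have hsumR : ∀ t : ℝ, 0 ≤ t → aR t + bR t = t := by
    intro t ht
    have key : ∀ ε > (0:ℝ), |aR t + bR t - t| ≤ 2 * ε := by
      intro ε hε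
      obtain ⟨q, hq1, hq2⟩ := exists_rat_btwn (show t - ε < t by linarith)
      obtain ⟨q', hq1', hq2'⟩ := exists_rat_btwn (show t < t + ε by linarith)
      have e1 : aR (q:ℝ) = aL q := haRq q
      have e2 : bR (q:ℝ) = bL q := hbRq q
      have e3 : aR (q':ℝ) = aL q' := haRq q'
      have e4 : bR (q':ℝ) = bL q' := hbRq q'
      have h1 : aL q ≤ aR t := by rw [← e1]; exact maR hq2.le
      have h2 : bL q ≤ bR t := by rw [← e2]; exact mbR hq2.le
      have h3 : aR t ≤ aL q' := by rw [← e3]; exact maR hq1'.le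
      have h4 : bR t ≤ bL q' := by rw [← e4]; exact mbR hq1'.le
      have s1 := hsumQ q
      have s2 := hsumQ q'
      have hmq : (q:ℝ) ≤ max (q:ℝ) 0 := le_max_left _ _
      have hmq' : max (q':ℝ) 0 = (q':ℝ) := max_eq_left (by linarith : (0:ℝ) ≤ (q':ℝ))
      rw [abs_le]
      constructor
      · linarith
      · linarith
    by_contra hne
    have hd : 0 < |aR t + bR t - t| := abs_pos.mpr (sub_ne_zero.mpr hne)
    have := key (|aR t + bR t - t| / 4) (by linarith)
    linarith
  have hlevR : ∀ t : ℝ, 0 ≤ t → dist (φ (aR t) L.1) (φ (bR t) L.2.1) ≤ Λ := by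
    intro t ht
    obtain ⟨q, hq1, hq2⟩ := rat_approx_right t
    have hcont : Continuous fun u : ℝ => dist (φ (aR u) L.1) (φ (bR u) L.2.1) := by
      have c1 : Continuous fun u : ℝ => φ (aR u) L.1 :=
        hφ.1.comp (caR.prodMk continuous_const)
      have c2 : Continuous fun u : ℝ => φ (bR u) L.2.1 :=
        hφ.1.comp (cbR.prodMk continuous_const)
      exact c1.dist c2
    have h1 : Tendsto (fun j => dist (φ (aR ((q j : ℝ))) L.1) (φ (bR ((q j : ℝ))) L.2.1)) atTop
        (𝓝 (dist (φ (aR t) L.1) (φ (bR t) L.2.1))) := (hcont.tendsto t).comp hq2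
    refine le_of_tendsto h1 (Eventually.of_forall fun j => ?_)
    rw [haRq (q j), hbRq (q j)]
    exact hlevQ (q j)
  by_cases hbb : ∃ M, ∀ t, bR t ≤ M
  · exact tail_contra hφ That Λ ρhat c₂ μhat hμhat hρhat hc₂ hlev2 hThat
      L.1 L.2.1 aR bR maR mbR caR hlevR hsumR hbb
  by_cases hab : ∃ M, ∀ t, aR t ≤ M
  · refine tail_contra hφ That Λ ρhat c₂ μhat hμhat hρhat hc₂ hlev2 hThat
      L.2.1 L.1 bR aR mbR maR cbR (fun t ht => ?_) (fun t ht => ?_) hab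
    · rw [dist_comm]; exact hlevR t ht
    · rw [add_comm]; exact hsumR t ht
  push_neg at hbb hab
  set ζ : ℝ → ℝ := fun τ => (μ / 2) * Real.arctan τ with hζdef
  have hζ0 : ζ 0 = 0 := by simp [hζdef]
  have hζs : StrictMono ζ := fun u v huv =>
    mul_lt_mul_of_pos_left (Real.arctan_strictMono huv) (by linarith)
  have hζc : Continuous ζ := continuous_const.mul Real.continuous_arctan
  have hζbd : ∀ τ, |ζ τ| ≤ μ := by
    intro τ
    have h1 : |Real.arctan τ| ≤ Real.pi / 2 := by
      rw [abs_le]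
      exact ⟨(Real.neg_pi_div_two_lt_arctan τ).le, (Real.arctan_lt_pi_div_two τ).le⟩
    have h2 : |ζ τ| = (μ / 2) * |Real.arctan τ| := by
      rw [hζdef]
      rw [abs_mul, abs_of_nonneg (by linarith : (0:ℝ) ≤ μ / 2)]
    rw [h2]
    calc (μ / 2) * |Real.arctan τ| ≤ (μ / 2) * (Real.pi / 2) := by nlinarith
      _ ≤ (μ / 2) * 2 := by nlinarith [Real.pi_le_four]
      _ = μ := by ring
  set ahat : ℝ → ℝ := fun τ => aR τ + min τ 0 + ζ τ with hahatdef
  set bhat : ℝ → ℝ := fun τ => bR τ + min τ 0 + ζ τ with hbhatdef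
  have hahs : StrictMono ahat := by
    intro u v huv
    have h1 : aR u ≤ aR v := maR huv.le
    have h2 : min u 0 ≤ min v 0 := min_le_min huv.le le_rfl
    have h3 : ζ u < ζ v := hζs huv
    show aR u + min u 0 + ζ u < aR v + min v 0 + ζ v
    linarith
  have hbhs : StrictMono bhat := by
    intro u v huv
    have h1 : bR u ≤ bR v := mbR huv.le
    have h2 : min u 0 ≤ min v 0 := min_le_min huv.le le_rfl
    have h3 : ζ u < ζ v := hζs huv
    show bR u + min u 0 + ζ u < bR v + min v 0 + ζ v
    linarith
  have hahc : Continuous ahat := (caR.add (continuous_id.min continuous_const)).add hζc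
  have hbhc : Continuous bhat := (cbR.add (continuous_id.min continuous_const)).add hζc
  have hunbdda : Tendsto aR atTop atTop := by
    refine tendsto_atTop_atTop_of_monotone' maR ?_
    rintro ⟨M, hM⟩
    obtain ⟨t, ht⟩ := hab M
    exact absurd (hM ⟨t, rfl⟩) (not_le.mpr ht)
  have hunbddb : Tendsto bR atTop atTop := by
    refine tendsto_atTop_atTop_of_monotone' mbR ?_
    rintro ⟨M, hM⟩
    obtain ⟨t, ht⟩ := hbb M
    exact absurd (hM ⟨t, rfl⟩) (not_le.mpr ht)
  have hahTop : Tendsto ahat atTop atTop := by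
    have base := tendsto_atTop_add_const_right atTop (-μ) hunbdda
    refine tendsto_atTop_mono' atTop ?_ base
    filter_upwards [eventually_ge_atTop (0:ℝ)] with τ hτ
    have h1 := (abs_le.mp (hζbd τ)).1
    have h2 : min τ 0 = 0 := min_eq_right hτ
    show aR τ + (-μ) ≤ aR τ + min τ 0 + ζ τ
    rw [h2]; linarith
  have hbhTop : Tendsto bhat atTop atTop := by
    have base := tendsto_atTop_add_const_right atTop (-μ) hunbddb
    refine tendsto_atTop_mono' atTop ?_ base
    filter_upwards [eventually_ge_atTop (0:ℝ)] with τ hτ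
    have h1 := (abs_le.mp (hζbd τ)).1
    have h2 : min τ 0 = 0 := min_eq_right hτ
    show bR τ + (-μ) ≤ bR τ + min τ 0 + ζ τ
    rw [h2]; linarith
  have hahBot : Tendsto ahat atBot atBot := by
    have base : Tendsto (fun τ : ℝ => τ + μ) atBot atBot :=
      tendsto_atBot_add_const_right atBot μ tendsto_id
    refine tendsto_atBot_mono' atBot ?_ base
    filter_upwards [eventually_le_atBot (0:ℝ)] with τ hτ
    have h1 := (abs_le.mp (hζbd τ)).2
    have h2 : min τ 0 = τ := min_eq_left hτ
    have h3 : aR τ = 0 := haRneg τ hτ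
    show aR τ + min τ 0 + ζ τ ≤ τ + μ
    rw [h2, h3]; linarith
  have hbhBot : Tendsto bhat atBot atBot := by
    have base : Tendsto (fun τ : ℝ => τ + μ) atBot atBot :=
      tendsto_atBot_add_const_right atBot μ tendsto_id
    refine tendsto_atBot_mono' atBot ?_ base
    filter_upwards [eventually_le_atBot (0:ℝ)] with τ hτ
    have h1 := (abs_le.mp (hζbd τ)).2
    have h2 : min τ 0 = τ := min_eq_left hτ
    have h3 : bR τ = 0 := hbRneg τ hτ
    show bR τ + min τ 0 + ζ τ ≤ τ + μ
    rw [h2, h3]; linarith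
  have hahSurj : Function.Surjective ahat := hahc.surjective hahTop hahBot
  have hbhSurj : Function.Surjective bhat := hbhc.surjective hbhTop hbhBot
  set E := StrictMono.orderIsoOfSurjective bhat hbhs hbhSurj with hEdef
  set h : ℝ → ℝ := fun t => ahat (E.symm t) with hhdef
  have hEsymmval : ∀ t : ℝ, bhat (E.symm t) = t := fun t =>
    StrictMono.orderIsoOfSurjective_self_symm_apply bhat hbhs hbhSurj t
  have hb00 : bhat 0 = 0 := by
    show bR 0 + min (0:ℝ) 0 + ζ 0 = 0
    rw [hbRneg 0 le_rfl, hζ0]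
    norm_num
  have hEsymm0 : E.symm 0 = 0 := by
    have h1 : E 0 = (0:ℝ) := hb00
    have h2 := OrderIso.symm_apply_apply E 0
    rw [h1] at h2
    exact h2
  have hreparam : Reparam h := by
    refine ⟨hahs.comp E.symm.strictMono, hahc.comp (OrderIso.continuous E.symm),
      hahSurj.comp E.symm.surjective, ?_⟩
    show ahat (E.symm 0) = 0
    rw [hEsymm0]
    show aR 0 + min (0:ℝ) 0 + ζ 0 = 0
    rw [haRneg 0 le_rfl, hζ0]
    norm_num
  have hshadow : ∀ t ≥ (0:ℝ), dist (φ (h t) L.1) (φ t L.2.1) < δ₂ := by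
    intro t ht
    set τ := E.symm t with hτdef
    have hbt : bhat τ = t := hEsymmval t
    have hτ0 : 0 ≤ τ := by
      by_contra hcon2
      push_neg at hcon2
      have h5 : bhat τ < bhat 0 := hbhs hcon2
      rw [hb00, hbt] at h5
      exact absurd h5 (not_lt.mpr ht)
    have hminτ : min τ 0 = 0 := min_eq_right hτ0
    have hht : h t = aR τ + ζ τ := by
      show ahat τ = _
      show aR τ + min τ 0 + ζ τ = _
      rw [hminτ]; ring
    have htt : t = bR τ + ζ τ := by
      rw [← hbt]
      show bR τ + min τ 0 + ζ τ = _
      rw [hminτ]; ring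
    rw [hht, htt]
    have e1 : φ (aR τ + ζ τ) L.1 = φ (ζ τ) (φ (aR τ) L.1) := by
      rw [← flow_add hφ, add_comm]
    have e2 : φ (bR τ + ζ τ) L.2.1 = φ (ζ τ) (φ (bR τ) L.2.1) := by
      rw [← flow_add hφ, add_comm]
    rw [e1, e2]
    have d1 : dist (φ (ζ τ) (φ (aR τ) L.1)) (φ (aR τ) L.1) ≤ c₁ := by
      rw [dist_comm]; exact hc₁ _ _ (hζbd τ)
    have d2 : dist (φ (bR τ) L.2.1) (φ (ζ τ) (φ (bR τ) L.2.1)) ≤ c₁ := hc₁ _ _ (hζbd τ)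
    have d3 : dist (φ (aR τ) L.1) (φ (bR τ) L.2.1) ≤ Λ := hlevR τ hτ0
    calc dist (φ (ζ τ) (φ (aR τ) L.1)) (φ (ζ τ) (φ (bR τ) L.2.1))
        ≤ dist (φ (ζ τ) (φ (aR τ) L.1)) (φ (aR τ) L.1)
          + dist (φ (aR τ) L.1) (φ (bR τ) L.2.1)
          + dist (φ (bR τ) L.2.1) (φ (ζ τ) (φ (bR τ) L.2.1)) := dist_triangle4 _ _ _ _
      _ ≤ c₁ + Λ + c₁ := add_le_add (add_le_add d1 d3) d2
      _ < δ₂ := by linarith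
  obtain ⟨s, hs, hys⟩ := hPE L.1 L.2.1 h hreparam hshadow
  have hcontra := hfarQ s hs
  rw [hys, dist_self] at hcontra
  linarith

/-- A partial backward synchronisation between `x` and `y`: monotone time budgets
on `[0, S]`, frozen beyond `S`, keeping the backward orbits `Λ`-close. -/
structure Trail {X : Type*} [MetricSpace X] (φ : ℝ → X → X) (x y : X) (Λ : ℝ) where
  S : ℝ
  a : ℝ → ℝ
  b : ℝ → ℝ
  hS : 0 ≤ S
  ma : Monotone a
  mb : Monotone b
  ca : Continuous a
  cb : Continuous b
  aneg : ∀ t : ℝ, t ≤ 0 → a t = 0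
  bneg : ∀ t : ℝ, t ≤ 0 → b t = 0
  frozena : ∀ t : ℝ, S ≤ t → a t = a S
  frozenb : ∀ t : ℝ, S ≤ t → b t = b S
  sum : ∀ t : ℝ, 0 ≤ t → t ≤ S → a t + b t = t
  lev : ∀ t : ℝ, 0 ≤ t → dist (φ (-(a t)) x) (φ (-(b t)) y) ≤ Λ

lemma trail_a_nonneg {X : Type*} [MetricSpace X] {φ : ℝ → X → X} {x y : X} {Λ : ℝ}
    (T : Trail φ x y Λ) (t : ℝ) : 0 ≤ T.a t := by
  rcases le_total t 0 with h | h
  · rw [T.aneg t h]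
  · have := T.ma h
    rw [T.aneg 0 le_rfl] at this
    exact this

lemma trail_b_nonneg {X : Type*} [MetricSpace X] {φ : ℝ → X → X} {x y : X} {Λ : ℝ}
    (T : Trail φ x y Λ) (t : ℝ) : 0 ≤ T.b t := by
  rcases le_total t 0 with h | h
  · rw [T.bneg t h]
  · have := T.mb h
    rw [T.bneg 0 le_rfl] at this
    exact this

lemma trail_a_le {X : Type*} [MetricSpace X] {φ : ℝ → X → X} {x y : X} {Λ : ℝ}
    (T : Trail φ x y Λ) (t : ℝ) : T.a t ≤ max t 0 := by
  rcases le_total t 0 with h | h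
  · rw [T.aneg t h]; exact le_max_right _ _
  · rcases le_total t T.S with h2 | h2
    · have h3 := T.sum t h h2
      have h4 := trail_b_nonneg T t
      have : T.a t ≤ t := by linarith
      exact le_trans this (le_max_left _ _)
    · rw [T.frozena t h2]
      have h3 := T.sum T.S T.hS le_rfl
      have h4 := trail_b_nonneg T T.S
      have : T.a T.S ≤ T.S := by linarith
      exact le_trans (le_trans this h2) (le_max_left _ _)

lemma trail_b_le {X : Type*} [MetricSpace X] {φ : ℝ → X → X} {x y : X} {Λ : ℝ}
    (T : Trail φ x y Λ) (t : ℝ) : T.b t ≤ max t 0 := by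
  rcases le_total t 0 with h | h
  · rw [T.bneg t h]; exact le_max_right _ _
  · rcases le_total t T.S with h2 | h2
    · have h3 := T.sum t h h2
      have h4 := trail_a_nonneg T t
      have : T.b t ≤ t := by linarith
      exact le_trans this (le_max_left _ _)
    · rw [T.frozenb t h2]
      have h3 := T.sum T.S T.hS le_rfl
      have h4 := trail_a_nonneg T T.S
      have : T.b T.S ≤ T.S := by linarith
      exact le_trans (le_trans this h2) (le_max_left _ _)

/-- Extending a trail by moving the two budgets linearly by `va` and `vb`. -/
lemma trail_extend {X : Type*} [MetricSpace X] {φ : ℝ → X → X} {x y : X} {Λ : ℝ}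
    (T : Trail φ x y Λ) (va vb : ℝ) (hva : 0 ≤ va) (hvb : 0 ≤ vb)
    (hlevext : ∀ u : ℝ, 0 ≤ u → u ≤ 1 →
      dist (φ (-(T.a T.S + u * va)) x) (φ (-(T.b T.S + u * vb)) y) ≤ Λ) :
    ∃ T' : Trail φ x y Λ, T'.S = T.S + (va + vb) ∧
      (∀ t, t ≤ T.S → (T'.a t = T.a t ∧ T'.b t = T.b t)) ∧
      T'.a T'.S = T.a T.S + va ∧ T'.b T'.S = T.b T.S + vb := by
  rcases eq_or_lt_of_le (add_nonneg hva hvb) with hΔ | hΔ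
  · -- degenerate: va = vb = 0
    have hva0 : va = 0 := by linarith
    have hvb0 : vb = 0 := by linarith
    refine ⟨T, by rw [← hΔ]; ring, fun t _ => ⟨rfl, rfl⟩, ?_, ?_⟩
    · rw [hva0]; ring
    · rw [hvb0]; ring
  · set Δ : ℝ := va + vb with hΔdef
    set c : ℝ → ℝ := fun t => min (max (t - T.S) 0) Δ with hcdef
    have hc0 : ∀ t, t ≤ T.S → c t = 0 := by
      intro t ht
      show min (max (t - T.S) 0) Δ = 0
      rw [max_eq_right (by linarith : t - T.S ≤ 0)]
      exact min_eq_left hΔ.le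
    have hcS' : ∀ t, T.S + Δ ≤ t → c t = Δ := by
      intro t ht
      show min (max (t - T.S) 0) Δ = Δ
      rw [max_eq_left (by linarith : (0:ℝ) ≤ t - T.S)]
      exact min_eq_right (by linarith)
    have hcmid : ∀ t, T.S ≤ t → t ≤ T.S + Δ → c t = t - T.S := by
      intro t h1 h2
      show min (max (t - T.S) 0) Δ = t - T.S
      rw [max_eq_left (by linarith : (0:ℝ) ≤ t - T.S)]
      exact min_eq_left (by linarith)
    have hcmono : Monotone c := fun u v huv =>
      min_le_min (max_le_max (by linarith) le_rfl) le_rfl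
    have hccont : Continuous c :=
      ((continuous_id.sub continuous_const).max continuous_const).min continuous_const
    have hcnn : ∀ t, 0 ≤ c t := fun t => le_min (le_max_right _ _) hΔ.le
    have hcub : ∀ t, c t ≤ Δ := fun t => min_le_right _ _
    have hfa : ∀ t, T.S ≤ t → T.a t = T.a T.S := T.frozena
    have hfb : ∀ t, T.S ≤ t → T.b t = T.b T.S := T.frozenb
    have hdiva : va / Δ * Δ = va := div_mul_cancel₀ va hΔ.ne'
    have hdivb : vb / Δ * Δ = vb := div_mul_cancel₀ vb hΔ.ne'
    have hann : 0 ≤ va / Δ := div_nonneg hva hΔ.le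
    have hbnn : 0 ≤ vb / Δ := div_nonneg hvb hΔ.le
    have hsumS := T.sum T.S T.hS le_rfl
    refine ⟨{ S := T.S + Δ
              a := fun t => T.a t + (va / Δ) * c t
              b := fun t => T.b t + (vb / Δ) * c t
              hS := by linarith [T.hS]
              ma := fun u v huv => add_le_add (T.ma huv)
                (mul_le_mul_of_nonneg_left (hcmono huv) hann)
              mb := fun u v huv => add_le_add (T.mb huv)
                (mul_le_mul_of_nonneg_left (hcmono huv) hbnn)
              ca := T.ca.add (continuous_const.mul hccont)
              cb := T.cb.add (continuous_const.mul hccont)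
              aneg := by
                intro t ht
                show T.a t + va / Δ * c t = 0
                rw [T.aneg t ht, hc0 t (le_trans ht T.hS)]
                ring
              bneg := by
                intro t ht
                show T.b t + vb / Δ * c t = 0
                rw [T.bneg t ht, hc0 t (le_trans ht T.hS)]
                ring
              frozena := by
                intro t ht
                have h1 : T.S ≤ t := by linarith
                show T.a t + va / Δ * c t = T.a (T.S + Δ) + va / Δ * c (T.S + Δ)
                rw [hfa t h1, hcS' t ht, hfa (T.S + Δ) (by linarith), hcS' (T.S + Δ) le_rfl]
              frozenb := by
                intro t ht
                have h1 : T.S ≤ t := by linarith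
                show T.b t + vb / Δ * c t = T.b (T.S + Δ) + vb / Δ * c (T.S + Δ)
                rw [hfb t h1, hcS' t ht, hfb (T.S + Δ) (by linarith), hcS' (T.S + Δ) le_rfl]
              sum := by
                intro t h1 h2
                show T.a t + va / Δ * c t + (T.b t + vb / Δ * c t) = t
                rcases le_total t T.S with h3 | h3
                · rw [hc0 t h3]
                  have := T.sum t h1 h3
                  linarith [this]
                · rw [hfa t h3, hfb t h3, hcmid t h3 h2]
                  have h4 : va / Δ + vb / Δ = 1 := by
                    field_simp
                    exact hΔdef.symm
                  nlinarith [hsumS, h4]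
              lev := by
                intro t ht
                show dist (φ (-(T.a t + va / Δ * c t)) x) (φ (-(T.b t + vb / Δ * c t)) y) ≤ Λ
                rcases le_total t T.S with h3 | h3
                · rw [hc0 t h3]
                  simp only [mul_zero, add_zero]
                  exact T.lev t ht
                · rw [hfa t h3, hfb t h3]
                  have hu1 : 0 ≤ c t / Δ := div_nonneg (hcnn t) hΔ.le
                  have hu2 : c t / Δ ≤ 1 := by
                    rw [div_le_one hΔ]
                    exact hcub t
                  have e1 : va / Δ * c t = (c t / Δ) * va := by ring
                  have e2 : vb / Δ * c t = (c t / Δ) * vb := by ring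
                  rw [e1, e2]
                  exact hlevext (c t / Δ) hu1 hu2 }, ?_, ?_, ?_, ?_⟩
    · rfl
    · intro t ht
      constructor
      · show T.a t + va / Δ * c t = T.a t
        rw [hc0 t ht]; ring
      · show T.b t + vb / Δ * c t = T.b t
        rw [hc0 t ht]; ring
    · show T.a (T.S + Δ) + va / Δ * c (T.S + Δ) = T.a T.S + va
      rw [hfa (T.S + Δ) (by linarith), hcS' (T.S + Δ) le_rfl, hdiva]
    · show T.b (T.S + Δ) + vb / Δ * c (T.S + Δ) = T.b T.S + vb
      rw [hfb (T.S + Δ) (by linarith), hcS' (T.S + Δ) le_rfl, hdivb]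

/-- Invariant for the trail iteration. -/
def TrailGood {X : Type*} [MetricSpace X] (φ : ℝ → X → X) (x y : X) (Λ ρw Tst : ℝ)
    (T : Trail φ x y Λ) : Prop :=
  (dist (φ (-(T.a T.S)) x) (φ (-(T.b T.S)) y) < ρw ∧
    (∀ t : ℝ, 0 ≤ t → 2 * ρw ≤ dist (φ (-(T.a T.S + t)) x) (φ (-(T.b T.S + t)) y) →
      (Tst ≤ T.a T.S + t ∧ Tst ≤ T.b T.S + t))) ∨
  (∀ t : ℝ, 0 ≤ t → dist (φ (-(T.a T.S + t)) x) (φ (-(T.b T.S + t)) y) < 2 * ρw)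

set_option maxHeartbeats 1600000 in
/-- One step of the construction: any good trail extends by at least `Lst` on both sides. -/
lemma step_lemma {X : Type*} [MetricSpace X] [CompactSpace X] {φ : ℝ → X → X} (hφ : IsFlow φ)
    (x y : X) (Λ ρw Tst Lst η₁ ρbar θs That : ℝ)
    (hρw : 0 < ρw) (hΛ2 : 2 * ρw ≤ Λ)
    (hLst : 0 < Lst)
    (hLω : ∀ (z : X) (u : ℝ), |u| ≤ Lst → dist z (φ u z) < ρw / 2)
    (hη₁ω : ∀ (z : X) (u : ℝ), |u| ≤ η₁ → dist z (φ u z) < Λ / 2)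
    (hη₁That : η₁ ≤ That) (hη₁0 : 0 ≤ η₁)
    (hρbar : ∀ (z : X) (β : ℝ), η₁ ≤ |β| → |β| ≤ That → ρbar ≤ dist z (φ β z))
    (hsize : 2 * ρw + θs < ρbar)
    (hθρw : θs < ρw) (hθΛ : θs ≤ Λ / 2) (hρwΛ : ρw ≤ Λ / 2)
    (hθhat : ∀ p q : X, dist p q < θs → ∀ c : ℝ, 0 ≤ c → c ≤ That →
      dist (φ (-c) p) (φ (-c) q) < ρw)
    (hUstar : ∀ (A B : X) (S : ℝ) (al be : ℝ → ℝ),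
      0 ≤ S → Monotone al → Monotone be → al 0 = 0 → be 0 = 0 →
      (∀ u, 0 ≤ u → u ≤ S → al u + be u = u) →
      (∀ u, 0 ≤ u → u ≤ S → dist (φ (al u) A) (φ (be u) B) ≤ Λ) →
      Tst ≤ al S → Tst ≤ be S →
      ∃ s, |s| ≤ That ∧ dist B (φ s A) < θs)
    (T : Trail φ x y Λ) (hinv : TrailGood φ x y Λ ρw Tst T) :
    ∃ T' : Trail φ x y Λ,
      T.S ≤ T'.S ∧ (∀ t, t ≤ T.S → (T'.a t = T.a t ∧ T'.b t = T.b t)) ∧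
      T.a T.S + Lst ≤ T'.a T'.S ∧ T.b T.S + Lst ≤ T'.b T'.S ∧
      TrailGood φ x y Λ ρw Tst T' := by
  classical
  have hflowx : ∀ r u : ℝ, φ (-(r + u)) x = φ (-u) (φ (-r) x) := by
    intro r u
    rw [← flow_add hφ]
    congr 1
    ring
  have hflowy : ∀ r u : ℝ, φ (-(r + u)) y = φ (-u) (φ (-r) y) := by
    intro r u
    rw [← flow_add hφ]
    congr 1
    ring
  have fax : ∀ a b : ℝ, φ a (φ b x) = φ (a + b) x := fun a b => (flow_add hφ a b x).symm
  have fay : ∀ a b : ℝ, φ a (φ b y) = φ (a + b) y := fun a b => (flow_add hφ a b y).symm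
  -- parallel safety from a small start
  have hpar : dist (φ (-(T.a T.S)) x) (φ (-(T.b T.S)) y) < ρw →
      ∀ u : ℝ, 0 ≤ u → u ≤ Lst →
      dist (φ (-(T.a T.S + u)) x) (φ (-(T.b T.S + u)) y) < 2 * ρw := by
    intro h0 u h1 h2
    rw [hflowx, hflowy]
    set p := φ (-(T.a T.S)) x
    set q := φ (-(T.b T.S)) y
    have d1 : dist (φ (-u) p) p < ρw / 2 := by
      rw [dist_comm]
      exact hLω p (-u) (by rw [abs_neg, abs_of_nonneg h1]; exact h2)
    have d2 : dist q (φ (-u) q) < ρw / 2 :=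
      hLω q (-u) (by rw [abs_neg, abs_of_nonneg h1]; exact h2)
    calc dist (φ (-u) p) (φ (-u) q)
        ≤ dist (φ (-u) p) p + dist p q + dist q (φ (-u) q) := dist_triangle4 _ _ _ _
      _ < ρw / 2 + ρw + ρw / 2 := by
          have := h0
          gcongr
      _ = 2 * ρw := by ring
  -- generic safe parallel extension
  have hsafe_ext : (∀ t : ℝ, 0 ≤ t →
      dist (φ (-(T.a T.S + t)) x) (φ (-(T.b T.S + t)) y) < 2 * ρw) →
      ∃ T' : Trail φ x y Λ,
      T.S ≤ T'.S ∧ (∀ t, t ≤ T.S → (T'.a t = T.a t ∧ T'.b t = T.b t)) ∧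
      T.a T.S + Lst ≤ T'.a T'.S ∧ T.b T.S + Lst ≤ T'.b T'.S ∧
      TrailGood φ x y Λ ρw Tst T' := by
    intro hsafe
    have hlevext : ∀ u : ℝ, 0 ≤ u → u ≤ 1 →
        dist (φ (-(T.a T.S + u * Lst)) x) (φ (-(T.b T.S + u * Lst)) y) ≤ Λ := by
      intro u h1 h2
      have := hsafe (u * Lst) (mul_nonneg h1 hLst.le)
      linarith
    obtain ⟨T', hS', hpre, ha', hb'⟩ := trail_extend T Lst Lst hLst.le hLst.le hlevext
    refine ⟨T', by rw [hS']; linarith, hpre, by rw [ha'], by rw [hb'],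
      Or.inr ?_⟩
    intro t ht
    rw [ha', hb']
    have e1 : T.a T.S + Lst + t = T.a T.S + (Lst + t) := by ring
    have e2 : T.b T.S + Lst + t = T.b T.S + (Lst + t) := by ring
    rw [e1, e2]
    exact hsafe (Lst + t) (by linarith)
  rcases hinv with ⟨hd0, hwin⟩ | hsafe
  · by_cases hstuck : ∃ u : ℝ, 0 ≤ u ∧
        2 * ρw ≤ dist (φ (-(T.a T.S + u)) x) (φ (-(T.b T.S + u)) y)
    · -- genuine stuck time: run to it, extract a translate, burn it
      obtain ⟨u₀, hu₀⟩ := hstuck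
      set E : Set ℝ := {u : ℝ | 0 ≤ u ∧
        2 * ρw ≤ dist (φ (-(T.a T.S + u)) x) (φ (-(T.b T.S + u)) y)} with hEdef
      have hDc : Continuous fun u : ℝ =>
          dist (φ (-(T.a T.S + u)) x) (φ (-(T.b T.S + u)) y) := by
        have c1 : Continuous fun u : ℝ => φ (-(T.a T.S + u)) x :=
          hφ.1.comp (((continuous_const.add continuous_id).neg).prodMk continuous_const)
        have c2 : Continuous fun u : ℝ => φ (-(T.b T.S + u)) y :=
          hφ.1.comp (((continuous_const.add continuous_id).neg).prodMk continuous_const)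
        exact c1.dist c2
      have hEclosed : IsClosed E := by
        have : E = {u : ℝ | 0 ≤ u} ∩ {u : ℝ | 2 * ρw ≤
            dist (φ (-(T.a T.S + u)) x) (φ (-(T.b T.S + u)) y)} := rfl
        rw [this]
        exact (isClosed_le continuous_const continuous_id).inter
          (isClosed_le continuous_const hDc)
      have hEne : E.Nonempty := ⟨u₀, hu₀⟩
      have hEbdd : BddBelow E := ⟨0, fun u hu => hu.1⟩
      set τ := sInf E with hτdef
      have hτE : τ ∈ E := hEclosed.csInf_mem hEne hEbdd
      have hτ0 : 0 ≤ τ := hτE.1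
      have hτlb : ∀ u : ℝ, 0 ≤ u → u < τ →
          dist (φ (-(T.a T.S + u)) x) (φ (-(T.b T.S + u)) y) < 2 * ρw := by
        intro u h1 h2
        by_contra hcon
        push_neg at hcon
        exact absurd (csInf_le hEbdd ⟨h1, hcon⟩) (not_le.mpr h2)
      have hτLst : Lst ≤ τ := by
        by_contra hcon
        push_neg at hcon
        have h1 := hpar hd0 τ hτ0 hcon.le
        linarith [hτE.2]
      have hτpos : 0 < τ := lt_of_lt_of_le hLst hτLst
      have hDτ : dist (φ (-(T.a T.S + τ)) x) (φ (-(T.b T.S + τ)) y) ≤ 2 * ρw := by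
        set tj : ℕ → ℝ := fun j => τ - τ / (j + 1) with htj
        have h1 : ∀ j : ℕ, 0 ≤ tj j ∧ tj j < τ := by
          intro j
          have ha : 0 < τ / ((j:ℝ) + 1) := by positivity
          have hb : τ / ((j:ℝ) + 1) ≤ τ := by
            rw [div_le_iff₀ (by positivity : (0:ℝ) < (j:ℝ) + 1)]
            nlinarith
          constructor
          · show 0 ≤ τ - τ / ((j:ℝ) + 1); linarith
          · show τ - τ / ((j:ℝ) + 1) < τ; linarith
        have h2 : Tendsto tj atTop (𝓝 τ) := by
          have h3 : Tendsto (fun j : ℕ => τ / ((j:ℝ) + 1)) atTop (𝓝 0) := by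
            have := tendsto_one_div_add_atTop_nhds_zero_nat.const_mul τ
            simpa [div_eq_mul_inv, mul_comm] using this
          have h4 : Tendsto (fun j : ℕ => τ - τ / ((j:ℝ) + 1)) atTop (𝓝 (τ - 0)) :=
            Tendsto.sub tendsto_const_nhds h3
          simpa using h4
        have h3 : Tendsto (fun j => dist (φ (-(T.a T.S + tj j)) x) (φ (-(T.b T.S + tj j)) y))
            atTop (𝓝 (dist (φ (-(T.a T.S + τ)) x) (φ (-(T.b T.S + τ)) y))) :=
          (hDc.tendsto τ).comp h2
        exact le_of_tendsto h3 (Eventually.of_forall fun j =>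
          (hτlb (tj j) (h1 j).1 (h1 j).2).le)
      -- parallel run up to the stuck time
      have hlevpar : ∀ u : ℝ, 0 ≤ u → u ≤ 1 →
          dist (φ (-(T.a T.S + u * τ)) x) (φ (-(T.b T.S + u * τ)) y) ≤ Λ := by
        intro u h1 h2
        have h3 : 0 ≤ u * τ := mul_nonneg h1 hτ0
        rcases lt_or_eq_of_le (show u * τ ≤ τ by nlinarith) with h5 | h5
        · exact le_trans (hτlb _ h3 h5).le (by linarith)
        · rw [h5]
          linarith [hDτ]
      obtain ⟨T1, hS1, hpre1, ha1, hb1⟩ := trail_extend T τ τ hτ0 hτ0 hlevpar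
      set Ax := φ (-(T.a T.S + τ)) x with hAxdef
      set By := φ (-(T.b T.S + τ)) y with hBydef
      -- reversed reparametrisations for the extraction lemma
      set alr : ℝ → ℝ := fun u => (T.a T.S + τ) - T1.a (T1.S - u) with halrdef
      set ber : ℝ → ℝ := fun u => (T.b T.S + τ) - T1.b (T1.S - u) with hberdef
      have hsumT : T.a T.S + T.b T.S = T.S := T.sum T.S T.hS le_rfl
      have halr0 : alr 0 = 0 := by
        show (T.a T.S + τ) - T1.a (T1.S - 0) = 0
        rw [sub_zero, ha1]
        ring
      have hber0 : ber 0 = 0 := by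
        show (T.b T.S + τ) - T1.b (T1.S - 0) = 0
        rw [sub_zero, hb1]
        ring
      have halrm : Monotone alr := fun u v huv =>
        sub_le_sub_left (T1.ma (by linarith)) _
      have hberm : Monotone ber := fun u v huv =>
        sub_le_sub_left (T1.mb (by linarith)) _
      have hsumr : ∀ u : ℝ, 0 ≤ u → u ≤ T1.S → alr u + ber u = u := by
        intro u h1 h2
        have h3 := T1.sum (T1.S - u) (by linarith) (by linarith)
        show (T.a T.S + τ) - T1.a (T1.S - u) + ((T.b T.S + τ) - T1.b (T1.S - u)) = u
        rw [hS1] at h3 ⊢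
        linarith
      have hlevr : ∀ u : ℝ, 0 ≤ u → u ≤ T1.S →
          dist (φ (alr u) Ax) (φ (ber u) By) ≤ Λ := by
        intro u h1 h2
        have e1 : φ (alr u) Ax = φ (-(T1.a (T1.S - u))) x := by
          rw [hAxdef, ← flow_add hφ]
          congr 1
          show (T.a T.S + τ) - T1.a (T1.S - u) + -(T.a T.S + τ) = -(T1.a (T1.S - u))
          ring
        have e2 : φ (ber u) By = φ (-(T1.b (T1.S - u))) y := by
          rw [hBydef, ← flow_add hφ]
          congr 1
          show (T.b T.S + τ) - T1.b (T1.S - u) + -(T.b T.S + τ) = -(T1.b (T1.S - u))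
          ring
        rw [e1, e2]
        exact T1.lev (T1.S - u) (by linarith)
      have hwinr := hwin τ hτ0 hτE.2
      have halrS : alr T1.S = T.a T.S + τ := by
        show (T.a T.S + τ) - T1.a (T1.S - T1.S) = T.a T.S + τ
        rw [sub_self, T1.aneg 0 le_rfl]
        ring
      have hberS : ber T1.S = T.b T.S + τ := by
        show (T.b T.S + τ) - T1.b (T1.S - T1.S) = T.b T.S + τ
        rw [sub_self, T1.bneg 0 le_rfl]
        ring
      obtain ⟨s, hsThat, hsθ⟩ := hUstar Ax By T1.S alr ber T1.hS halrm hberm halr0 hber0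
        hsumr hlevr (by rw [halrS]; exact hwinr.1) (by rw [hberS]; exact hwinr.2)
      have hAxBy : dist Ax By ≤ 2 * ρw := hDτ
      have hsmall : |s| ≤ η₁ := by
        by_contra hcon
        push_neg at hcon
        have h1 := hρbar Ax s hcon.le hsThat
        have h2 : dist Ax (φ s Ax) ≤ dist Ax By + dist By (φ s Ax) := dist_triangle _ _ _
        linarith [hsθ]
      rcases le_total s 0 with hsneg | hspos
      · -- burn on the x side
        have hσ0 : 0 ≤ -s := by linarith
        have hση : -s ≤ η₁ := by
          rw [abs_of_nonpos hsneg] at hsmall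
          exact hsmall
        have hlevburn : ∀ u : ℝ, 0 ≤ u → u ≤ 1 →
            dist (φ (-(T1.a T1.S + u * -s)) x) (φ (-(T1.b T1.S + u * 0)) y) ≤ Λ := by
          intro u h1 h2
          rw [ha1, hb1]
          simp only [mul_zero, add_zero]
          have e1 : φ (-(T.a T.S + τ + u * -s)) x = φ (-(u * -s)) Ax := by
            rw [hAxdef, ← flow_add hφ]
            congr 1
            ring
          rw [e1]
          have key1 : dist (φ (-(u * -s)) Ax) (φ s Ax) < Λ / 2 := by
            have e2 : φ s Ax = φ (u * -s + s) (φ (-(u * -s)) Ax) := by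
              simp only [hAxdef, fax]
              congr 1
              ring
            rw [e2]
            refine hη₁ω _ _ ?_
            rw [abs_le]
            constructor
            · nlinarith
            · nlinarith
          have key2 : dist (φ s Ax) By < θs := by rw [dist_comm]; exact hsθ
          calc dist (φ (-(u * -s)) Ax) By
              ≤ dist (φ (-(u * -s)) Ax) (φ s Ax) + dist (φ s Ax) By := dist_triangle _ _ _
            _ ≤ Λ / 2 + θs := by linarith
            _ ≤ Λ := by linarith
        obtain ⟨T2, hS2, hpre2, ha2, hb2⟩ := trail_extend T1 (-s) 0 hσ0 le_rfl hlevburn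
        have hend : dist (φ (-(T2.a T2.S)) x) (φ (-(T2.b T2.S)) y) < θs := by
          rw [ha2, hb2, ha1, hb1]
          simp only [add_zero]
          have e1 : φ (-(T.a T.S + τ + -s)) x = φ s Ax := by
            rw [hAxdef, ← flow_add hφ]
            congr 1
            ring
          rw [e1, dist_comm]
          exact hsθ
        refine ⟨T2, ?_, ?_, ?_, ?_, Or.inl ⟨by linarith [hend], ?_⟩⟩
        · rw [hS2, hS1]; linarith
        · intro t ht
          have h1 := hpre1 t ht
          have h2 := hpre2 t (by rw [hS1]; linarith)
          exact ⟨h2.1.trans h1.1, h2.2.trans h1.2⟩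
        · rw [ha2, ha1]; linarith
        · rw [hb2, hb1]; linarith
        · intro t ht _
          rw [ha2, hb2, ha1, hb1]
          constructor
          · linarith [hwinr.1]
          · linarith [hwinr.2]
      · -- burn on the y side
        have hση : s ≤ η₁ := by
          rw [abs_of_nonneg hspos] at hsmall
          exact hsmall
        have hsθ' : dist (φ s Ax) By < θs := by rw [dist_comm]; exact hsθ
        have hlevburn : ∀ u : ℝ, 0 ≤ u → u ≤ 1 →
            dist (φ (-(T1.a T1.S + u * 0)) x) (φ (-(T1.b T1.S + u * s)) y) ≤ Λ := by
          intro u h1 h2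
          rw [ha1, hb1]
          simp only [mul_zero, add_zero]
          have e1 : φ (-(T.b T.S + τ + u * s)) y = φ (-(u * s)) By := by
            rw [hBydef, ← flow_add hφ]
            congr 1
            ring
          rw [e1]
          have key1 : dist Ax (φ (s - u * s) Ax) < Λ / 2 := by
            refine hη₁ω _ _ ?_
            rw [abs_le]
            constructor
            · nlinarith
            · nlinarith
          have key2 : dist (φ (s - u * s) Ax) (φ (-(u * s)) By) < ρw := by
            have e2 : φ (s - u * s) Ax = φ (-(u * s)) (φ s Ax) := by
              simp only [hAxdef, fax]
              congr 1
              ring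
            rw [e2]
            exact hθhat _ _ hsθ' (u * s) (by nlinarith) (by nlinarith)
          calc dist Ax (φ (-(u * s)) By)
              ≤ dist Ax (φ (s - u * s) Ax) + dist (φ (s - u * s) Ax) (φ (-(u * s)) By) :=
                dist_triangle _ _ _
            _ ≤ Λ / 2 + ρw := by linarith
            _ ≤ Λ := by linarith
        obtain ⟨T2, hS2, hpre2, ha2, hb2⟩ := trail_extend T1 0 s le_rfl hspos hlevburn
        have hend : dist (φ (-(T2.a T2.S)) x) (φ (-(T2.b T2.S)) y) < ρw := by
          rw [ha2, hb2, ha1, hb1]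
          simp only [add_zero]
          have e1 : φ (-(T.b T.S + τ + s)) y = φ (-s) By := by
            rw [hBydef, ← flow_add hφ]
            congr 1
            ring
          have e2 : φ (-(T.a T.S + τ)) x = φ (-s) (φ s Ax) := by
            simp only [hAxdef, fax]
            congr 1
            ring
          rw [e1, e2]
          exact hθhat _ _ hsθ' s hspos (by linarith)
        refine ⟨T2, ?_, ?_, ?_, ?_, Or.inl ⟨hend, ?_⟩⟩
        · rw [hS2, hS1]; linarith
        · intro t ht
          have h1 := hpre1 t ht
          have h2 := hpre2 t (by rw [hS1]; linarith)
          exact ⟨h2.1.trans h1.1, h2.2.trans h1.2⟩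
        · rw [ha2, ha1]; linarith
        · rw [hb2, hb1]; linarith
        · intro t ht _
          rw [ha2, hb2, ha1, hb1]
          constructor
          · linarith [hwinr.1]
          · linarith [hwinr.2]
    · push_neg at hstuck
      exact hsafe_ext (fun t ht => hstuck t ht)
  · exact hsafe_ext hsafe

set_option maxHeartbeats 1600000 in
/-- Iterating the step and gluing the trails into global reparametrizations. -/
lemma chain_assembly {X : Type*} [MetricSpace X] {φ : ℝ → X → X} (hφ : IsFlow φ)
    (x y : X) (Λ ρw Tst Lst : ℝ) (hLst : 0 < Lst)
    (T0 : Trail φ x y Λ) (hgood0 : TrailGood φ x y Λ ρw Tst T0)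
    (hstep : ∀ T : Trail φ x y Λ, TrailGood φ x y Λ ρw Tst T →
      ∃ T' : Trail φ x y Λ, T.S ≤ T'.S ∧
        (∀ t, t ≤ T.S → (T'.a t = T.a t ∧ T'.b t = T.b t)) ∧
        T.a T.S + Lst ≤ T'.a T'.S ∧ T.b T.S + Lst ≤ T'.b T'.S ∧
        TrailGood φ x y Λ ρw Tst T') :
    ∃ h₁ h₂ : ℝ → ℝ, ReparamRest h₁ ∧ ReparamRest h₂ ∧
      ∀ t : ℝ, 0 ≤ t → dist (φ (-(h₁ t)) x) (φ (-(h₂ t)) y) ≤ Λ := by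
  classical
  choose stp hS hpre hadva hadvb hgood using hstep
  let next : {T : Trail φ x y Λ // TrailGood φ x y Λ ρw Tst T} →
      {T : Trail φ x y Λ // TrailGood φ x y Λ ρw Tst T} :=
    fun p => ⟨stp p.1 p.2, hgood p.1 p.2⟩
  let ch : ℕ → {T : Trail φ x y Λ // TrailGood φ x y Λ ρw Tst T} :=
    fun n => next^[n] ⟨T0, hgood0⟩
  have hch : ∀ n, ch (n + 1) = next (ch n) := fun n =>
    Function.iterate_succ_apply' next n _
  set Tn : ℕ → Trail φ x y Λ := fun n => (ch n).1 with hTndef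
  have hTn : ∀ n, Tn (n + 1) = stp (Tn n) (ch n).2 := fun n =>
    congrArg Subtype.val (hch n)
  have hTS : ∀ n, (Tn n).S ≤ (Tn (n + 1)).S := by
    intro n
    rw [hTn n]
    exact hS (Tn n) (ch n).2
  have hTSm : ∀ m n, m ≤ n → (Tn m).S ≤ (Tn n).S := by
    intro m n hmn
    induction n with
    | zero => rw [Nat.le_zero.mp hmn]
    | succ n ih =>
      rcases Nat.lt_or_ge m (n + 1) with h | h
      · exact le_trans (ih (Nat.lt_succ_iff.mp h)) (hTS n)
      · rw [Nat.le_antisymm hmn h]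
  have hcoh : ∀ m n, m ≤ n → ∀ t, t ≤ (Tn m).S →
      ((Tn n).a t = (Tn m).a t ∧ (Tn n).b t = (Tn m).b t) := by
    intro m n hmn
    induction n with
    | zero =>
      rw [Nat.le_zero.mp hmn]
      exact fun t _ => ⟨rfl, rfl⟩
    | succ n ih =>
      rcases Nat.lt_or_ge m (n + 1) with h | h
      · intro t ht
        have h1 := ih (Nat.lt_succ_iff.mp h) t ht
        have h2 : t ≤ (Tn n).S := le_trans ht (hTSm m n (Nat.lt_succ_iff.mp h))
        have h3 : (Tn (n+1)).a t = (Tn n).a t ∧ (Tn (n+1)).b t = (Tn n).b t := by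
          rw [hTn n]
          exact hpre (Tn n) (ch n).2 t h2
        exact ⟨h3.1.trans h1.1, h3.2.trans h1.2⟩
      · rw [Nat.le_antisymm hmn h]
        exact fun t _ => ⟨rfl, rfl⟩
  have hadv : ∀ n : ℕ, (n : ℝ) * Lst ≤ (Tn n).a (Tn n).S ∧
      (n : ℝ) * Lst ≤ (Tn n).b (Tn n).S := by
    intro n
    induction n with
    | zero =>
      simp only [Nat.cast_zero, zero_mul]
      exact ⟨trail_a_nonneg _ _, trail_b_nonneg _ _⟩
    | succ n ih =>
      have h1 : (Tn n).a (Tn n).S + Lst ≤ (Tn (n+1)).a (Tn (n+1)).S := by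
        rw [hTn n]
        exact hadva (Tn n) (ch n).2
      have h2 : (Tn n).b (Tn n).S + Lst ≤ (Tn (n+1)).b (Tn (n+1)).S := by
        rw [hTn n]
        exact hadvb (Tn n) (ch n).2
      push_cast
      constructor
      · nlinarith [ih.1]
      · nlinarith [ih.2]
  have hSgrow : ∀ n : ℕ, (n : ℝ) * Lst ≤ (Tn n).S := by
    intro n
    have h1 := (hadv n).1
    have h2 := (Tn n).sum (Tn n).S (Tn n).hS le_rfl
    have h3 := trail_b_nonneg (Tn n) (Tn n).S
    linarith
  have hbig : ∀ r : ℝ, ∃ n : ℕ, r ≤ (Tn n).S := by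
    intro r
    obtain ⟨n, hn⟩ := exists_nat_ge (r / Lst)
    refine ⟨n, le_trans ?_ (hSgrow n)⟩
    rw [div_le_iff₀ hLst] at hn
    exact hn
  -- monotonicity in n of the budgets at a fixed time
  have hmonon : ∀ (t : ℝ) (m n : ℕ), m ≤ n →
      (Tn m).a t ≤ (Tn n).a t ∧ (Tn m).b t ≤ (Tn n).b t := by
    intro t m n hmn
    rcases le_total t (Tn m).S with h | h
    · have := hcoh m n hmn t h
      exact ⟨le_of_eq this.1.symm, le_of_eq this.2.symm⟩
    · have e1 : (Tn m).a t = (Tn m).a (Tn m).S := (Tn m).frozena t h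
      have e2 : (Tn m).b t = (Tn m).b (Tn m).S := (Tn m).frozenb t h
      have h3 := hcoh m n hmn (Tn m).S le_rfl
      constructor
      · rw [e1, ← h3.1]
        exact (Tn n).ma h
      · rw [e2, ← h3.2]
        exact (Tn n).mb h
  have hbddA : ∀ t : ℝ, BddAbove (Set.range fun n => (Tn n).a t) := by
    intro t
    refine ⟨max t 0, ?_⟩
    rintro v ⟨n, rfl⟩
    exact trail_a_le (Tn n) t
  have hbddB : ∀ t : ℝ, BddAbove (Set.range fun n => (Tn n).b t) := by
    intro t
    refine ⟨max t 0, ?_⟩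
    rintro v ⟨n, rfl⟩
    exact trail_b_le (Tn n) t
  set g1 : ℝ → ℝ := fun t => ⨆ n, (Tn n).a t with hg1def
  set g2 : ℝ → ℝ := fun t => ⨆ n, (Tn n).b t with hg2def
  have hstabA : ∀ (t : ℝ) (n : ℕ), t ≤ (Tn n).S → g1 t = (Tn n).a t := by
    intro t n ht
    refine le_antisymm (ciSup_le fun m => ?_) (le_ciSup (hbddA t) n)
    rcases le_total m n with h | h
    · exact (hmonon t m n h).1
    · exact le_of_eq (hcoh n m h t ht).1
  have hstabB : ∀ (t : ℝ) (n : ℕ), t ≤ (Tn n).S → g2 t = (Tn n).b t := by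
    intro t n ht
    refine le_antisymm (ciSup_le fun m => ?_) (le_ciSup (hbddB t) n)
    rcases le_total m n with h | h
    · exact (hmonon t m n h).2
    · exact le_of_eq (hcoh n m h t ht).2
  have hg1mono : Monotone g1 := by
    intro t t' htt'
    exact ciSup_le fun n => le_trans ((Tn n).ma htt') (le_ciSup (hbddA t') n)
  have hg2mono : Monotone g2 := by
    intro t t' htt'
    exact ciSup_le fun n => le_trans ((Tn n).mb htt') (le_ciSup (hbddB t') n)
  have hg1cont : Continuous g1 := by
    rw [continuous_iff_continuousAt]
    intro t₀
    obtain ⟨n, hn⟩ := hbig (t₀ + 1)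
    have hev : g1 =ᶠ[𝓝 t₀] (Tn n).a := by
      have hopen : Iio ((Tn n).S) ∈ 𝓝 t₀ := Iio_mem_nhds (by linarith)
      filter_upwards [hopen] with t ht
      exact hstabA t n (le_of_lt ht)
    exact ((Tn n).ca.continuousAt).congr hev.symm
  have hg2cont : Continuous g2 := by
    rw [continuous_iff_continuousAt]
    intro t₀
    obtain ⟨n, hn⟩ := hbig (t₀ + 1)
    have hev : g2 =ᶠ[𝓝 t₀] (Tn n).b := by
      have hopen : Iio ((Tn n).S) ∈ 𝓝 t₀ := Iio_mem_nhds (by linarith)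
      filter_upwards [hopen] with t ht
      exact hstabB t n (le_of_lt ht)
    exact ((Tn n).cb.continuousAt).congr hev.symm
  have hg1neg : ∀ t : ℝ, t ≤ 0 → g1 t = 0 := by
    intro t ht
    rw [hstabA t 0 (le_trans ht (Tn 0).hS)]
    exact (Tn 0).aneg t ht
  have hg2neg : ∀ t : ℝ, t ≤ 0 → g2 t = 0 := by
    intro t ht
    rw [hstabB t 0 (le_trans ht (Tn 0).hS)]
    exact (Tn 0).bneg t ht
  have hg1top : Tendsto g1 atTop atTop := by
    rw [tendsto_atTop_atTop]
    intro C
    obtain ⟨n, hn⟩ := exists_nat_ge (C / Lst)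
    have hnC : C ≤ (n : ℝ) * Lst := by
      rw [div_le_iff₀ hLst] at hn
      exact hn
    refine ⟨(Tn n).S, fun t ht => ?_⟩
    have h1 : (Tn n).a t ≤ g1 t := le_ciSup (hbddA t) n
    have h2 : (Tn n).a (Tn n).S ≤ (Tn n).a t := (Tn n).ma ht
    have h3 := (hadv n).1
    linarith
  have hg2top : Tendsto g2 atTop atTop := by
    rw [tendsto_atTop_atTop]
    intro C
    obtain ⟨n, hn⟩ := exists_nat_ge (C / Lst)
    have hnC : C ≤ (n : ℝ) * Lst := by
      rw [div_le_iff₀ hLst] at hn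
      exact hn
    refine ⟨(Tn n).S, fun t ht => ?_⟩
    have h1 : (Tn n).b t ≤ g2 t := le_ciSup (hbddB t) n
    have h2 : (Tn n).b (Tn n).S ≤ (Tn n).b t := (Tn n).mb ht
    have h3 := (hadv n).2
    linarith
  have hlevg : ∀ t : ℝ, 0 ≤ t → dist (φ (-(g1 t)) x) (φ (-(g2 t)) y) ≤ Λ := by
    intro t ht
    obtain ⟨n, hn⟩ := hbig t
    rw [hstabA t n hn, hstabB t n hn]
    exact (Tn n).lev t ht
  -- final reparametrizations
  set h₁ : ℝ → ℝ := fun t => g1 t + min t 0 with hh₁def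
  set h₂ : ℝ → ℝ := fun t => g2 t + min t 0 with hh₂def
  have hminc : Continuous fun t : ℝ => min t 0 := continuous_id.min continuous_const
  have hminm : Monotone fun t : ℝ => min t 0 := fun u v huv => min_le_min huv le_rfl
  have hrep : ∀ (g : ℝ → ℝ), Monotone g → Continuous g → (∀ t ≤ (0:ℝ), g t = 0) →
      Tendsto g atTop atTop → ReparamRest (fun t => g t + min t 0) := by
    intro g hm hc hneg htop
    have hmono : Monotone fun t => g t + min t 0 := fun u v huv =>
      add_le_add (hm huv) (hminm huv)
    have hcont : Continuous fun t => g t + min t 0 := hc.add hminc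
    have htop' : Tendsto (fun t => g t + min t 0) atTop atTop := by
      have base := tendsto_atTop_add_const_right atTop (0:ℝ) htop
      refine tendsto_atTop_mono' atTop ?_ base
      filter_upwards [eventually_ge_atTop (0:ℝ)] with t ht
      rw [min_eq_right ht]
    have hbot' : Tendsto (fun t => g t + min t 0) atBot atBot := by
      have hEE : (fun t : ℝ => g t + min t 0) =ᶠ[atBot] (fun t => t) := by
        filter_upwards [eventually_le_atBot (0:ℝ)] with t ht
        rw [hneg t ht, min_eq_left ht]
        ring
      exact Tendsto.congr' hEE.symm tendsto_id
    refine ⟨hmono, hcont, hcont.surjective htop' hbot', ?_⟩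
    have h1 : g 0 = 0 := hneg 0 le_rfl
    simp [h1]
  refine ⟨h₁, h₂, hrep g1 hg1mono hg1cont hg1neg hg1top, hrep g2 hg2mono hg2cont hg2neg hg2top,
    ?_⟩
  intro t ht
  have e : min t 0 = 0 := min_eq_right ht
  show dist (φ (-(g1 t + min t 0)) x) (φ (-(g2 t + min t 0)) y) ≤ Λ
  rw [e, add_zero, add_zero]
  exact hlevg t ht
end PEAux

set_option maxHeartbeats 1600000 in
/-- Every point of a positive expansive flow without singular points is stable for the
inverse flow, with `δ` uniform over `X`. -/
theorem positive_expansive_uniform_inverse_stability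
    {X : Type*} [MetricSpace X] [CompactSpace X] (φ : ℝ → X → X)
    (hφ : IsFlow φ) (hns : ∀ x : X, ¬ IsSingular φ x) (hexp : PosExpansive φ) :
    ∀ ε > (0 : ℝ), ∃ δ > (0 : ℝ), ∀ x y : X, dist x y < δ →
      ∃ h₁ h₂ : ℝ → ℝ, ReparamRest h₁ ∧ ReparamRest h₂ ∧
        ∀ t ≥ (0 : ℝ), dist (φ (-(h₁ t)) x) (φ (-(h₂ t)) y) < ε := by
  classical
  intro ε hε
  rcases isEmpty_or_nonempty X with hX | hX
  · exact ⟨1, one_pos, fun x => (hX.false x).elim⟩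
  obtain ⟨That, hThat, hnoper⟩ := PEAux.no_small_period hφ hns
  obtain ⟨δ₂, hδ₂, hPE⟩ := hexp That hThat
  obtain ⟨ρhat, hρhatpos, hρhat⟩ :=
    PEAux.flow_min_dist hφ That (fun z => hnoper z That hThat le_rfl)
  set Λ : ℝ := min ε (min δ₂ ρhat) / 4 with hΛdef
  have hminpos : 0 < min ε (min δ₂ ρhat) := lt_min hε (lt_min hδ₂ hρhatpos)
  have hΛpos : 0 < Λ := by rw [hΛdef]; linarith
  have hΛε : Λ ≤ ε / 4 := by
    have := min_le_left ε (min δ₂ ρhat)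
    rw [hΛdef]; linarith
  have hΛδ₂ : Λ ≤ δ₂ / 4 := by
    have h1 := min_le_right ε (min δ₂ ρhat)
    have h2 := min_le_left δ₂ ρhat
    rw [hΛdef]; linarith
  have hΛρhat : Λ ≤ ρhat / 4 := by
    have h1 := min_le_right ε (min δ₂ ρhat)
    have h2 := min_le_right δ₂ ρhat
    rw [hΛdef]; linarith
  obtain ⟨η₀, hη₀pos, -, hη₀ω⟩ := PEAux.flow_omega hφ (Λ / 2) (by linarith)
  set η₁ := min η₀ That with hη₁def
  have hη₁pos : 0 < η₁ := lt_min hη₀pos hThat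
  have hη₁That : η₁ ≤ That := min_le_right _ _
  have hη₁ω : ∀ (z : X) (u : ℝ), |u| ≤ η₁ → dist z (φ u z) < Λ / 2 :=
    fun z u hu => hη₀ω z u (le_trans hu (min_le_left _ _))
  obtain ⟨ρbar, hρbarpos, hρbar⟩ := PEAux.flow_band_min hφ hns η₁ That hη₁pos hη₁That
    (fun z β h1 h2 => hnoper z β h1 h2)
  set ρw := min (ρbar / 8) (Λ / 2) with hρwdef
  have hρwpos : 0 < ρw := lt_min (by linarith) (by linarith)
  have hρwρbar : ρw ≤ ρbar / 8 := min_le_left _ _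
  have hρwΛ : ρw ≤ Λ / 2 := min_le_right _ _
  obtain ⟨δuc, hδucpos, hδuc⟩ := PEAux.flow_uc hφ That ρw hρwpos
  set θs := min (ρw / 2) (δuc / 2) with hθsdef
  have hθspos : 0 < θs := lt_min (by linarith) (by linarith)
  have hθsρw : θs < ρw := lt_of_le_of_lt (min_le_left _ _) (by linarith)
  have hθsΛ : θs ≤ Λ / 2 := le_trans (min_le_left _ _) (by linarith)
  have hθhat : ∀ p q : X, dist p q < θs → ∀ c : ℝ, 0 ≤ c → c ≤ That →
      dist (φ (-c) p) (φ (-c) q) < ρw := by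
    intro p q hpq c h1 h2
    refine hδuc (-c) ?_ p q ?_
    · rw [abs_neg, abs_of_nonneg h1]; exact h2
    · have := min_le_right (ρw / 2) (δuc / 2)
      rw [hθsdef] at hpq
      linarith
  obtain ⟨μ, hμpos, -, hμω⟩ := PEAux.flow_omega hφ (δ₂ / 4) (by linarith)
  obtain ⟨μh, hμhpos, -, hμhω⟩ := PEAux.flow_omega hφ (ρhat / 4) (by linarith)
  obtain ⟨Tst, hTstpos, hUstar⟩ := PEAux.extraction hφ That δ₂ Λ θs ρhat (δ₂ / 4) (ρhat / 4) μ μh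
    hThat hθspos (by linarith) hPE hρhat hμpos (fun z β h => (hμω z β h).le)
    hμhpos (fun z β h => (hμhω z β h).le) (by linarith) (by linarith)
  obtain ⟨Lst, hLstpos, -, hLω⟩ := PEAux.flow_omega hφ (ρw / 2) (by linarith)
  obtain ⟨δpar, hδparpos, hδpar⟩ := PEAux.flow_uc hφ Tst (2 * ρw) (by linarith)
  refine ⟨min δpar ρw, lt_min hδparpos hρwpos, ?_⟩
  intro x y hxy
  have hxyρw : dist x y < ρw := lt_of_lt_of_le hxy (min_le_right _ _)
  have hxyδpar : dist x y < δpar := lt_of_lt_of_le hxy (min_le_left _ _)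
  have hxyΛ : dist x y ≤ Λ := by linarith
  -- the zero trail
  refine ?_
  let Tz : PEAux.Trail φ x y Λ :=
    { S := 0
      a := fun _ => 0
      b := fun _ => 0
      hS := le_rfl
      ma := monotone_const
      mb := monotone_const
      ca := continuous_const
      cb := continuous_const
      aneg := fun _ _ => rfl
      bneg := fun _ _ => rfl
      frozena := fun _ _ => rfl
      frozenb := fun _ _ => rfl
      sum := fun t h1 h2 => by
        show (0:ℝ) + 0 = t
        rw [← le_antisymm h1 h2]
        norm_num
      lev := fun t ht => by
        show dist (φ (-(0:ℝ)) x) (φ (-(0:ℝ)) y) ≤ Λ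
        rw [neg_zero, PEAux.flow_zero hφ x, PEAux.flow_zero hφ y]
        exact hxyΛ }
  have hTza : Tz.a Tz.S = 0 := rfl
  have hTzb : Tz.b Tz.S = 0 := rfl
  have hgood0 : PEAux.TrailGood φ x y Λ ρw Tst Tz := by
    left
    constructor
    · rw [hTza, hTzb, neg_zero, PEAux.flow_zero hφ x, PEAux.flow_zero hφ y]
      exact hxyρw
    · intro t ht hdist
      rw [hTza, hTzb, zero_add] at hdist ⊢
      rcases le_or_gt t Tst with h | h
      · exfalso
        have h2 := hδpar (-t) (by rw [abs_neg, abs_of_nonneg ht]; exact h) x y hxyδpar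
        linarith
      · exact ⟨h.le, h.le⟩
  have hstep : ∀ T : PEAux.Trail φ x y Λ, PEAux.TrailGood φ x y Λ ρw Tst T →
      ∃ T' : PEAux.Trail φ x y Λ, T.S ≤ T'.S ∧
        (∀ t, t ≤ T.S → (T'.a t = T.a t ∧ T'.b t = T.b t)) ∧
        T.a T.S + Lst ≤ T'.a T'.S ∧ T.b T.S + Lst ≤ T'.b T'.S ∧
        PEAux.TrailGood φ x y Λ ρw Tst T' := by
    intro T hT
    refine PEAux.step_lemma hφ x y Λ ρw Tst Lst η₁ ρbar θs That
      hρwpos (by linarith) hLstpos hLω hη₁ω hη₁That hη₁pos.le hρbar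
      ?_ hθsρw hθsΛ hρwΛ hθhat hUstar T hT
    have h1 : θs ≤ ρw / 2 := min_le_left _ _
    linarith
  obtain ⟨h₁, h₂, hr1, hr2, hlev⟩ :=
    PEAux.chain_assembly hφ x y Λ ρw Tst Lst hLstpos Tz hgood0 hstep
  exact ⟨h₁, h₂, hr1, hr2, fun t ht => lt_of_le_of_lt (hlev t ht) (by linarith)⟩
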